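/- arXiv:math/0103197 — 3 statements merged into one kernel-verified Lean document; each statement's English description precedes it below -/
import Mathlib

section
/- Let K be a field, R = K[x_0,…,x_n], and let I_1 ⊇ I_2 ⊇ ⋯ ⊇ I_r be homogeneous ideals of R. Let F_1,…,F_r ∈ R be homogeneous elements with deg F_i = d_i such that I_i :_R (F_i) = I_i for each i. Define J_1 := I_1 + (F_1) and J_k := I_k + F_k·J_{k−1} for 2 ≤ k ≤ r, so that J_r = I_r + F_r·I_{r−1} + F_rF_{r−1}·I_{r−2} + ⋯ + F_r⋯F_2·I_1 + (F_r F_{r−1}⋯F_1). Then for every integer t, h_{R/J_r}(t) = Σ_{i=1}^{r} h_{R/(I_i + (F_i))}(t − d_r − d_{r−1} − ⋯ − d_{i+1}) (the shift being 0 for i = r). -/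
open MvPolynomial

/-- An ideal of a polynomial ring is homogeneous (with respect to the standard grading)
if it contains all homogeneous components of each of its elements. -/
def Ideal.IsStdHomogeneous {K : Type} [Field K] {n : ℕ}
    (I : Ideal (MvPolynomial (Fin (n + 1)) K)) : Prop :=
  ∀ p ∈ I, ∀ i : ℕ, MvPolynomial.homogeneousComponent i p ∈ I

/-- The Hilbert function of `R/I`:  `h_{R/I}(t)` is the `K`-dimension of the degree `t`
graded component of `R/I`; it is `0` in negative degrees. -/
noncomputable def hilbertFn {K : Type} [Field K] {n : ℕ}
    (I : Ideal (MvPolynomial (Fin (n + 1)) K)) (t : ℤ) : ℕ :=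
  if t < 0 then 0
  else
    Module.finrank K
      ((MvPolynomial.homogeneousSubmodule (Fin (n + 1)) K t.toNat) ⧸
        Submodule.comap (MvPolynomial.homogeneousSubmodule (Fin (n + 1)) K t.toNat).subtype
          (Submodule.restrictScalars K I))

/- ### Auxiliary lemmas -/

lemma homogeneousComponent_mul_homog {K : Type} [Field K] {σ : Type*} {F : MvPolynomial σ K}
    {d : ℕ} (hF : F.IsHomogeneous d) (g : MvPolynomial σ K) (i : ℕ) :
    homogeneousComponent i (F * g) =
      if d ≤ i then F * homogeneousComponent (i - d) g else 0 := by
  conv_lhs => rw [← sum_homogeneousComponent g, Finset.mul_sum, map_sum]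
  rw [Finset.sum_congr rfl (fun j _ =>
    homogeneousComponent_of_mem
      ((hF.mul (homogeneousComponent_isHomogeneous j g)) :
        _ ∈ homogeneousSubmodule σ K (d + j)))]
  by_cases hdi : d ≤ i
  · have hiff : ∀ j : ℕ, (i = d + j) ↔ (j = i - d) := fun j => by omega
    simp_rw [hiff]
    rw [Finset.sum_ite_eq' (Finset.range (g.totalDegree + 1)) (i - d)
      (fun j => F * homogeneousComponent j g), if_pos hdi]
    by_cases hmem : i - d ∈ Finset.range (g.totalDegree + 1)
    · rw [if_pos hmem]
    · rw [if_neg hmem, homogeneousComponent_eq_zero _ g (by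
        simp only [Finset.mem_range, not_lt] at hmem; omega), mul_zero]
  · rw [if_neg hdi]
    exact Finset.sum_eq_zero fun j _ => if_neg (by omega)

section Aux

variable {K : Type} [Field K] {n : ℕ}

lemma stdhom_sup {A B : Ideal (MvPolynomial (Fin (n + 1)) K)}
    (hA : A.IsStdHomogeneous) (hB : B.IsStdHomogeneous) : (A ⊔ B).IsStdHomogeneous := by
  intro p hp i
  obtain ⟨a, ha, b, hb, rfl⟩ := Submodule.mem_sup.1 hp
  rw [map_add]
  exact Submodule.add_mem_sup (hA a ha i) (hB b hb i)

lemma stdhom_span_mul {B : Ideal (MvPolynomial (Fin (n + 1)) K)}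
    {F : MvPolynomial (Fin (n + 1)) K} {d : ℕ} (hF : F.IsHomogeneous d)
    (hB : B.IsStdHomogeneous) : (Ideal.span {F} * B).IsStdHomogeneous := by
  intro p hp i
  obtain ⟨b, hb, rfl⟩ := Ideal.mem_span_singleton_mul.1 hp
  rw [homogeneousComponent_mul_homog hF b i]
  split
  · exact Ideal.mem_span_singleton_mul.2 ⟨_, hB b hb (i - d), rfl⟩
  · exact Ideal.zero_mem _

lemma stdhom_span_singleton {F : MvPolynomial (Fin (n + 1)) K} {d : ℕ}
    (hF : F.IsHomogeneous d) : (Ideal.span {F} : Ideal _).IsStdHomogeneous := by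
  intro p hp i
  obtain ⟨g, rfl⟩ := Ideal.mem_span_singleton'.1 hp
  rw [mul_comm, homogeneousComponent_mul_homog hF g i]
  split
  · exact Ideal.mem_span_singleton'.2 ⟨_, mul_comm _ _⟩
  · exact Ideal.zero_mem _

instance hsFD (t : ℕ) :
    FiniteDimensional K (homogeneousSubmodule (Fin (n + 1)) K t) := by
  have hle : homogeneousSubmodule (Fin (n + 1)) K t ≤ restrictTotalDegree (Fin (n + 1)) K t :=
    fun p hp => (mem_restrictTotalDegree _ _ p).2
      (MvPolynomial.IsHomogeneous.totalDegree_le hp)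
  exact Module.Finite.equiv (Submodule.comapSubtypeEquivOfLe hle)

/-- dimension of the degree-`t` graded piece of `R/I`. -/
noncomputable def qdim (I : Ideal (MvPolynomial (Fin (n + 1)) K)) (t : ℕ) : ℕ :=
  Module.finrank K
    ((MvPolynomial.homogeneousSubmodule (Fin (n + 1)) K t) ⧸
      Submodule.comap (MvPolynomial.homogeneousSubmodule (Fin (n + 1)) K t).subtype
        (Submodule.restrictScalars K I))

lemma hilbertFn_eq (I : Ideal (MvPolynomial (Fin (n + 1)) K)) (t : ℤ) :
    hilbertFn I t = if t < 0 then 0 else qdim I t.toNat := rfl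

lemma step_nat {A B C : Ideal (MvPolynomial (Fin (n + 1)) K)}
    {F : MvPolynomial (Fin (n + 1)) K} {d : ℕ} (hF : F.IsHomogeneous d)
    (hC : C = A ⊔ Ideal.span {F} * B) (hChom : C.IsStdHomogeneous)
    (hcolon : ∀ x, F * x ∈ C → x ∈ B) (t : ℕ) (hdt : d ≤ t) :
    qdim C t = qdim (A ⊔ Ideal.span {F}) t + qdim B (t - d) := by
  unfold qdim
  set V := homogeneousSubmodule (Fin (n + 1)) K t with hVdef
  set W := homogeneousSubmodule (Fin (n + 1)) K (t - d) with hWdef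
  set C' : Submodule K V := Submodule.comap V.subtype (Submodule.restrictScalars K C) with hC'def
  set A' : Submodule K V :=
    Submodule.comap V.subtype (Submodule.restrictScalars K (A ⊔ Ideal.span {F})) with hA'def
  set B' : Submodule K W := Submodule.comap W.subtype (Submodule.restrictScalars K B) with hB'def
  have memC' : ∀ v : V, v ∈ C' ↔ (v : MvPolynomial (Fin (n + 1)) K) ∈ C := fun v => Iff.rfl
  have memA' : ∀ v : V, v ∈ A' ↔ (v : MvPolynomial (Fin (n + 1)) K) ∈ A ⊔ Ideal.span {F} :=
    fun v => Iff.rfl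
  have memB' : ∀ w : W, w ∈ B' ↔ (w : MvPolynomial (Fin (n + 1)) K) ∈ B := fun w => Iff.rfl
  have hFBC : ∀ b ∈ B, F * b ∈ C := fun b hb =>
    hC ▸ Submodule.mem_sup_right (Ideal.mem_span_singleton_mul.2 ⟨b, hb, rfl⟩)
  have hCA : C ≤ A ⊔ Ideal.span {F} :=
    hC ▸ sup_le le_sup_left (le_trans Ideal.mul_le_left le_sup_right)
  have hsupEq : A ⊔ Ideal.span {F} = C ⊔ Ideal.span {F} := by
    apply le_antisymm
    · exact sup_le (le_trans (hC ▸ le_sup_left) le_sup_left) le_sup_right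
    · exact sup_le hCA le_sup_right
  have hmul : ∀ w : W, F * (w : MvPolynomial (Fin (n + 1)) K) ∈ V := by
    intro w
    have := hF.mul ((mem_homogeneousSubmodule _ _).1 w.2)
    rwa [Nat.add_sub_cancel' hdt] at this
  let mulF : W →ₗ[K] V :=
    LinearMap.codRestrict V ((LinearMap.mulLeft K F).comp W.subtype) hmul
  have mulF_coe : ∀ w : W, (mulF w : MvPolynomial (Fin (n + 1)) K)
      = F * (w : MvPolynomial (Fin (n + 1)) K) := fun w => rfl
  have hBmap : B' ≤ Submodule.comap mulF C' := by
    intro w hw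
    simp only [Submodule.mem_comap]
    exact (memC' _).2 (hFBC _ ((memB' w).1 hw))
  let f : (W ⧸ B') →ₗ[K] (V ⧸ C') := Submodule.mapQ B' C' mulF hBmap
  let g : (V ⧸ C') →ₗ[K] (V ⧸ A') :=
    Submodule.mapQ C' A' LinearMap.id (fun v hv => Submodule.mem_comap.2 ((memA' _).2 (hCA ((memC' v).1 hv))))
  have hgsurj : Function.Surjective g := by
    intro y
    obtain ⟨x, rfl⟩ := Submodule.Quotient.mk_surjective _ y
    exact ⟨Submodule.Quotient.mk x, by rw [Submodule.mapQ_apply]; rfl⟩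
  have hfinj : Function.Injective f := by
    rw [← LinearMap.ker_eq_bot, eq_bot_iff]
    intro x hx
    obtain ⟨w, rfl⟩ := Submodule.Quotient.mk_surjective _ x
    rw [LinearMap.mem_ker, Submodule.mapQ_apply, Submodule.Quotient.mk_eq_zero] at hx
    have hwB : (w : MvPolynomial (Fin (n + 1)) K) ∈ B := hcolon _ ((memC' _).1 hx)
    rw [Submodule.mem_bot, Submodule.Quotient.mk_eq_zero]
    exact (memB' w).2 hwB
  have hexact : LinearMap.range f = LinearMap.ker g := by
    apply le_antisymm
    · rintro x ⟨y, rfl⟩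
      obtain ⟨w, rfl⟩ := Submodule.Quotient.mk_surjective _ y
      rw [LinearMap.mem_ker]
      show Submodule.mapQ C' A' LinearMap.id _ (Submodule.mapQ B' C' mulF hBmap _) = 0
      rw [Submodule.mapQ_apply, Submodule.mapQ_apply, Submodule.Quotient.mk_eq_zero]
      exact (memA' _).2 (Submodule.mem_sup_right
        (Ideal.mem_span_singleton.2 (dvd_mul_right F _)))
    · intro x hx
      obtain ⟨v, rfl⟩ := Submodule.Quotient.mk_surjective _ x
      rw [LinearMap.mem_ker, Submodule.mapQ_apply, Submodule.Quotient.mk_eq_zero] at hx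
      have hv2 : (v : MvPolynomial (Fin (n + 1)) K) ∈ C ⊔ Ideal.span {F} :=
        hsupEq ▸ (memA' v).1 hx
      obtain ⟨c, hc, p, hp, hcp⟩ := Submodule.mem_sup.1 hv2
      obtain ⟨g', rfl⟩ := Ideal.mem_span_singleton.1 hp
      have hvV : homogeneousComponent t (v : MvPolynomial (Fin (n + 1)) K)
          = (v : MvPolynomial (Fin (n + 1)) K) := by
        rw [homogeneousComponent_of_mem v.2, if_pos rfl]
      have hdecomp : (v : MvPolynomial (Fin (n + 1)) K)
          = homogeneousComponent t c + F * homogeneousComponent (t - d) g' := by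
        conv_lhs => rw [← hvV, ← hcp]
        rw [map_add, homogeneousComponent_mul_homog hF g' t, if_pos hdt]
      refine ⟨Submodule.Quotient.mk ⟨homogeneousComponent (t - d) g',
        homogeneousComponent_mem _ _⟩, ?_⟩
      show Submodule.Quotient.mk _ = Submodule.Quotient.mk v
      rw [Submodule.Quotient.eq]
      have hcoe : ((mulF ⟨homogeneousComponent (t - d) g', homogeneousComponent_mem _ _⟩ - v : V) :
          MvPolynomial (Fin (n + 1)) K) = -(homogeneousComponent t c) := by
        rw [Submodule.coe_sub, mulF_coe]
        rw [hdecomp]; ring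
      refine (memC' _).2 ?_
      rw [hcoe]
      exact neg_mem (hChom c hc t)
  haveI : FiniteDimensional K (V ⧸ C') := inferInstance
  have h1 := LinearMap.finrank_range_add_finrank_ker g
  rw [LinearMap.range_eq_top.2 hgsurj, finrank_top, ← hexact,
    LinearMap.finrank_range_of_inj hfinj] at h1
  exact h1.symm

lemma step_nat_lt {A B C : Ideal (MvPolynomial (Fin (n + 1)) K)}
    {F : MvPolynomial (Fin (n + 1)) K} {d : ℕ} (hF : F.IsHomogeneous d)
    (hC : C = A ⊔ Ideal.span {F} * B) (hChom : C.IsStdHomogeneous)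
    (t : ℕ) (hdt : t < d) :
    qdim C t = qdim (A ⊔ Ideal.span {F}) t := by
  unfold qdim
  have hCA : C ≤ A ⊔ Ideal.span {F} :=
    hC ▸ sup_le le_sup_left (le_trans Ideal.mul_le_left le_sup_right)
  have hsupEq : A ⊔ Ideal.span {F} = C ⊔ Ideal.span {F} := by
    apply le_antisymm
    · exact sup_le (le_trans (hC ▸ le_sup_left) le_sup_left) le_sup_right
    · exact sup_le hCA le_sup_right
  have hsub : Submodule.comap (homogeneousSubmodule (Fin (n + 1)) K t).subtype
        (Submodule.restrictScalars K (A ⊔ Ideal.span {F}))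
      = Submodule.comap (homogeneousSubmodule (Fin (n + 1)) K t).subtype
        (Submodule.restrictScalars K C) := by
    ext v
    constructor
    · intro hv
      have hv1 : (v : MvPolynomial (Fin (n + 1)) K) ∈ A ⊔ Ideal.span {F} := hv
      have hv2 : (v : MvPolynomial (Fin (n + 1)) K) ∈ C ⊔ Ideal.span {F} := hsupEq ▸ hv1
      obtain ⟨c, hc, p, hp, hcp⟩ := Submodule.mem_sup.1 hv2
      obtain ⟨g', rfl⟩ := Ideal.mem_span_singleton.1 hp
      have hvV : homogeneousComponent t (v : MvPolynomial (Fin (n + 1)) K)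
          = (v : MvPolynomial (Fin (n + 1)) K) := by
        rw [homogeneousComponent_of_mem v.2, if_pos rfl]
      have hvc : (v : MvPolynomial (Fin (n + 1)) K) = homogeneousComponent t c := by
        conv_lhs => rw [← hvV, ← hcp]
        rw [map_add, homogeneousComponent_mul_homog hF g' t, if_neg (by omega), add_zero]
      show (v : MvPolynomial (Fin (n + 1)) K) ∈ C
      rw [hvc]
      exact hChom c hc t
    · intro hv
      have hv1 : (v : MvPolynomial (Fin (n + 1)) K) ∈ C := hv
      exact hCA hv1
  rw [hsub]

lemma step_int {A B C : Ideal (MvPolynomial (Fin (n + 1)) K)}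
    {F : MvPolynomial (Fin (n + 1)) K} {d : ℕ} (hF : F.IsHomogeneous d)
    (hC : C = A ⊔ Ideal.span {F} * B) (hChom : C.IsStdHomogeneous)
    (hcolon : ∀ x, F * x ∈ C → x ∈ B) (t : ℤ) :
    hilbertFn C t = hilbertFn (A ⊔ Ideal.span {F}) t + hilbertFn B (t - d) := by
  rw [hilbertFn_eq, hilbertFn_eq, hilbertFn_eq]
  by_cases ht : t < 0
  · rw [if_pos ht, if_pos ht, if_pos (by omega : t - (d : ℤ) < 0)]
  · by_cases hdt : (d : ℤ) ≤ t
    · rw [if_neg ht, if_neg ht, if_neg (by omega : ¬ t - (d : ℤ) < 0),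
        show (t - (d : ℤ)).toNat = t.toNat - d by omega]
      exact step_nat hF hC hChom hcolon t.toNat (by omega)
    · rw [if_neg ht, if_neg ht, if_pos (by omega : t - (d : ℤ) < 0), add_zero]
      exact step_nat_lt hF hC hChom t.toNat (by omega)

lemma sum_Icc_succ_top' {M : Type*} [AddCommMonoid M] {a b : ℕ} (h : a ≤ b + 1) (f : ℕ → M) :
    ∑ i ∈ Finset.Icc a (b + 1), f i = (∑ i ∈ Finset.Icc a b, f i) + f (b + 1) := by
  rw [← Finset.Ico_add_one_right_eq_Icc, Finset.sum_Ico_succ_top h, Finset.Ico_add_one_right_eq_Icc]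

end Aux

/-- Corollary 3.5(iv) :  given a flag `I_1 ⊇ I_2 ⊇ ⋯ ⊇ I_r` of homogeneous ideals and
homogeneous elements `F_i` of degree `d_i` with `I_i : (F_i) = I_i`, setting
`J_1 = I_1 + (F_1)` and `J_k = I_k + F_k·J_{k−1}`, the Hilbert functions satisfy
`h_{R/J_r}(t) = Σ_{i=1}^{r} h_{R/(I_i + (F_i))}(t − d_r − d_{r−1} − ⋯ − d_{i+1})`. -/
theorem hilbert_function_of_union_of_hypersurface_sections {K : Type} [Field K] {n : ℕ}
    (r : ℕ) (hr : 1 ≤ r)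
    (I : ℕ → Ideal (MvPolynomial (Fin (n + 1)) K))
    (hIhom : ∀ i, 1 ≤ i → i ≤ r → (I i).IsStdHomogeneous)
    (hchain : ∀ i, 1 ≤ i → i < r → I (i + 1) ≤ I i)
    (F : ℕ → MvPolynomial (Fin (n + 1)) K) (d : ℕ → ℕ)
    (hF : ∀ i, 1 ≤ i → i ≤ r → (F i).IsHomogeneous (d i))
    (hcolon : ∀ i, 1 ≤ i → i ≤ r → Submodule.colon (I i) (Ideal.span {F i}) = I i)
    (J : ℕ → Ideal (MvPolynomial (Fin (n + 1)) K))
    (hJ1 : J 1 = I 1 ⊔ Ideal.span {F 1})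
    (hJk : ∀ k, 2 ≤ k → k ≤ r → J k = I k ⊔ Ideal.span {F k} * J (k - 1)) :
    ∀ t : ℤ,
      hilbertFn (J r) t =
        ∑ i ∈ Finset.Icc 1 r,
          hilbertFn (I i ⊔ Ideal.span {F i})
            (t - ∑ j ∈ Finset.Icc (i + 1) r, (d j : ℤ)) := by
  have key : ∀ k, 1 ≤ k → k ≤ r →
      ((J k).IsStdHomogeneous ∧ I k ≤ J k ∧
        ∀ t : ℤ, hilbertFn (J k) t =
          ∑ i ∈ Finset.Icc 1 k, hilbertFn (I i ⊔ Ideal.span {F i})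
            (t - ∑ j ∈ Finset.Icc (i + 1) k, (d j : ℤ))) := by
    intro k hk
    induction k, hk using Nat.le_induction with
    | base =>
      intro hkr
      refine ⟨?_, ?_, ?_⟩
      · rw [hJ1]
        exact stdhom_sup (hIhom 1 le_rfl hkr) (stdhom_span_singleton (hF 1 le_rfl hkr))
      · rw [hJ1]; exact le_sup_left
      · intro t
        rw [hJ1, Finset.Icc_self, Finset.sum_singleton,
          show Finset.Icc 2 1 = (∅ : Finset ℕ) from Finset.Icc_eq_empty (by omega),
          Finset.sum_empty, sub_zero]
    | succ k hk1 IH =>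
      intro hkr
      obtain ⟨hhomk, hIJk, hsumk⟩ := IH (by omega)
      have hJdef : J (k + 1) = I (k + 1) ⊔ Ideal.span {F (k + 1)} * J k := by
        have h := hJk (k + 1) (by omega) hkr
        simpa using h
      have hFk : (F (k + 1)).IsHomogeneous (d (k + 1)) := hF _ (by omega) hkr
      have hhom : (J (k + 1)).IsStdHomogeneous := by
        rw [hJdef]
        exact stdhom_sup (hIhom _ (by omega) hkr) (stdhom_span_mul hFk hhomk)
      have hcol : ∀ x, F (k + 1) * x ∈ J (k + 1) → x ∈ J k := by
        intro x hx
        rw [hJdef] at hx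
        obtain ⟨a, ha, p, hp, hap⟩ := Submodule.mem_sup.1 hx
        obtain ⟨b, hb, rfl⟩ := Ideal.mem_span_singleton_mul.1 hp
        have h1 : (x - b) * F (k + 1) ∈ I (k + 1) := by
          have heq : (x - b) * F (k + 1) = a := by linear_combination -hap
          rw [heq]; exact ha
        have h2 : x - b ∈ I (k + 1) := by
          rw [← hcolon (k + 1) (by omega) hkr]
          exact Ideal.mem_colon_span_singleton.2 h1
        have h3 : x - b ∈ J k := hIJk (hchain k hk1 (by omega) h2)
        have h4 := add_mem h3 hb
        simpa using h4
      refine ⟨hhom, hJdef ▸ le_sup_left, ?_⟩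
      intro t
      rw [step_int hFk hJdef hhom hcol t, hsumk (t - (d (k + 1) : ℤ))]
      rw [sum_Icc_succ_top' (by omega : 1 ≤ k + 1)]
      rw [show Finset.Icc (k + 1 + 1) (k + 1) = (∅ : Finset ℕ) from
        Finset.Icc_eq_empty (by omega), Finset.sum_empty, sub_zero]
      rw [add_comm]
      congr 1
      refine Finset.sum_congr rfl fun i hi => ?_
      have hik : i + 1 ≤ k + 1 := by
        have := (Finset.mem_Icc.1 hi).2; omega
      rw [sum_Icc_succ_top' hik]
      congr 1
      ring
  exact fun t => (key r hr le_rfl).2.2 t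
end

section
/- Let h = (h_0,…,h_t) be an O-sequence with h_1 ≤ c, and let (h^0,…,h^{α−1}) be its decomposition, where α is the initial degree of the lex-segment ideal of T = K[z_1,…,z_c] with Hilbert function h. Then LOIM(h) = ⋃_{j=0}^{α−1} y_c^j · LOIM(h^j), where LOIM(h^j) is taken inside K[y_1,…,y_{c−1}]. -/
open MvPolynomial

namespace GorensteinSI

/-- `b <ₗ a` in the lexicographic order on monomials (identified with exponent
vectors): the first nonzero coordinate of the difference is negative. -/
def lexLT {c : ℕ} (b a : Fin c →₀ ℕ) : Prop :=
  ∃ i : Fin c, b i < a i ∧ ∀ j : Fin c, j < i → b j = a j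

/-- `b ≤ₗ a` in the lexicographic order. -/
def lexLE {c : ℕ} (b a : Fin c →₀ ℕ) : Prop := b = a ∨ lexLT b a

/-- `b <ᵣ a` in the reverse lexicographic order: the last nonzero coordinate of the
difference is negative. -/
def revLexLT {c : ℕ} (b a : Fin c →₀ ℕ) : Prop :=
  ∃ i : Fin c, b i < a i ∧ ∀ j : Fin c, i < j → b j = a j

/-- `b ≤ᵣ a` in the reverse lexicographic order. -/
def revLexLE {c : ℕ} (b a : Fin c →₀ ℕ) : Prop := b = a ∨ revLexLT b a

/-- An ideal of a polynomial ring is homogeneous if it contains all homogeneous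
components of each of its elements. -/
def IsStdHomogeneous {K : Type} [Field K] {N : ℕ}
    (I : Ideal (MvPolynomial (Fin N) K)) : Prop :=
  ∀ p ∈ I, ∀ i : ℕ, MvPolynomial.homogeneousComponent i p ∈ I

/-- The dimension over `K` of the degree `t` graded piece of the quotient. -/
noncomputable def hilbOf {K : Type} [Field K] {N : ℕ}
    (I : Ideal (MvPolynomial (Fin N) K)) (t : ℕ) : ℕ :=
  Module.finrank K
    ((MvPolynomial.homogeneousSubmodule (Fin N) K t) ⧸
      Submodule.comap (MvPolynomial.homogeneousSubmodule (Fin N) K t).subtype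
        (Submodule.restrictScalars K I))

/-- An O-sequence: a sequence beginning with `1` which is the Hilbert function of a
standard graded `K`-algebra. -/
def OSequence (K : Type) [Field K] (h : ℕ → ℕ) : Prop :=
  h 0 = 1 ∧ ∃ (N : ℕ) (I : Ideal (MvPolynomial (Fin N) K)),
    IsStdHomogeneous I ∧ ∀ i, h i = hilbOf I i

/-- `LOIM(h)` in `c` variables: the union over `i` of the sets of the `h i` smallest
degree-`i` monomials in the reverse lexicographic order. -/
def LOIMset (c : ℕ) (h : ℕ → ℕ) : Set (Fin c →₀ ℕ) :=
  {a | Set.ncard {b : Fin c →₀ ℕ | b.degree = a.degree ∧ revLexLE b a} ≤ h a.degree}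

/-- `LOIM(h′)` taken inside `K[y_1,…,y_{c−1}]`, realized as the set of exponent vectors
in `c` variables whose last coordinate (the exponent of `y_c`) vanishes. -/
def LOIMsetBar (c : ℕ) (h' : ℕ → ℕ) : Set (Fin c →₀ ℕ) :=
  {a | (∀ hc : 0 < c, a ⟨c - 1, by omega⟩ = 0) ∧
    Set.ncard {b : Fin c →₀ ℕ | (∀ hc : 0 < c, b ⟨c - 1, by omega⟩ = 0) ∧
      b.degree = a.degree ∧ revLexLE b a} ≤ h' a.degree}

/-- The set of (exponent vectors of) monomials of the lex-segment ideal `J` of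
`T = K[z_1,…,z_c]` with Hilbert function `h`:  a monomial of degree `i` lies in `J`
exactly when it is not among the `h i` smallest degree-`i` monomials in the
lexicographic order. -/
def lexSegSet (c : ℕ) (h : ℕ → ℕ) : Set (Fin c →₀ ℕ) :=
  {a | h a.degree < Set.ncard {b : Fin c →₀ ℕ | b.degree = a.degree ∧ lexLE b a}}

/-- The initial degree `α` of the lex-segment ideal associated to `h` in `c`
variables. -/
noncomputable def alphaOf (c : ℕ) (h : ℕ → ℕ) : ℕ :=
  sInf {i : ℕ | h i < Nat.choose (c - 1 + i) i}

/-- The `j`-th entry `h^j` of the decomposition of `h`:  writing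
`J = Σ_j z_1^j·I_j` for the decomposition of the lex-segment ideal `J` associated to
`h`, `h^j i` is the number of degree-`i` monomials `m` in `z_2,…,z_c` with
`m ∉ I_j`, i.e. with `z_1^j·m ∉ J`;  this is the Hilbert function of
`T̄/(I_j ∩ T̄)`. -/
noncomputable def hdecomp (c : ℕ) (h : ℕ → ℕ) (j : ℕ) : ℕ → ℕ := fun i =>
  Set.ncard {a : Fin c →₀ ℕ |
    (∀ hc : 0 < c, a ⟨0, hc⟩ = 0) ∧ a.degree = i ∧
      (∀ hc : 0 < c, a + Finsupp.single (⟨0, hc⟩ : Fin c) j ∉ lexSegSet c h)}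


variable {c : ℕ}


/-- Reversal of coordinates. -/
def rv {c : ℕ} (b : Fin c →₀ ℕ) : Fin c →₀ ℕ := Finsupp.equivMapDomain Fin.revPerm b

lemma rv_apply (b : Fin c →₀ ℕ) (i : Fin c) : rv b i = b i.rev := by
  simp [rv, Finsupp.equivMapDomain_apply]

lemma rv_rv (b : Fin c →₀ ℕ) : rv (rv b) = b := by
  ext i; simp [rv_apply]

lemma rv_injective : Function.Injective (rv (c := c)) :=
  Function.Involutive.injective rv_rv

lemma rv_add (a b : Fin c →₀ ℕ) : rv (a + b) = rv a + rv b := by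
  ext i; simp [rv_apply]

lemma rv_single (a : Fin c) (n : ℕ) : rv (Finsupp.single a n) = Finsupp.single a.rev n := by
  simp [rv, Finsupp.equivMapDomain_single]

lemma degree_eq_sum_univ (b : Fin c →₀ ℕ) : b.degree = ∑ i, b i :=
  Finset.sum_subset (Finset.subset_univ _)
    (fun i _ hi => (Finsupp.notMem_support_iff.mp hi))

lemma degree_rv (b : Fin c →₀ ℕ) : (rv b).degree = b.degree := by
  rw [degree_eq_sum_univ, degree_eq_sum_univ]
  exact Fintype.sum_equiv Fin.revPerm _ _ (fun i => by simp [rv_apply])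

lemma lexLT_iff {b a : Fin c →₀ ℕ} : lexLT b a ↔ toLex b < toLex a := by
  constructor
  · rintro ⟨i, h1, h2⟩; exact ⟨i, fun d hd => h2 d hd, h1⟩
  · rintro ⟨i, h2, h1⟩; exact ⟨i, h1, fun d hd => h2 d hd⟩

lemma lexLE_iff {b a : Fin c →₀ ℕ} : lexLE b a ↔ toLex b ≤ toLex a := by
  rw [le_iff_lt_or_eq, lexLE, lexLT_iff]
  constructor
  · rintro (rfl | hlt)
    · exact Or.inr rfl
    · exact Or.inl hlt
  · rintro (hlt | heq)
    · exact Or.inr hlt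
    · exact Or.inl (toLex.injective heq)

lemma lexLE_refl (a : Fin c →₀ ℕ) : lexLE a a := Or.inl rfl

lemma lexLE_total (a b : Fin c →₀ ℕ) : lexLE a b ∨ lexLE b a := by
  rw [lexLE_iff, lexLE_iff]; exact le_total _ _

lemma lexLE_trans {a b d : Fin c →₀ ℕ} (h1 : lexLE a b) (h2 : lexLE b d) : lexLE a d := by
  rw [lexLE_iff] at *; exact le_trans h1 h2

lemma lexLE_antisymm {a b : Fin c →₀ ℕ} (h1 : lexLE a b) (h2 : lexLE b a) : a = b := by
  rw [lexLE_iff] at *; exact toLex.injective (le_antisymm h1 h2)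

lemma revLexLT_iff_rv {b a : Fin c →₀ ℕ} : revLexLT b a ↔ lexLT (rv b) (rv a) := by
  constructor
  · rintro ⟨i, h1, h2⟩
    refine ⟨i.rev, by simpa [rv_apply] using h1, fun j hj => ?_⟩
    rw [rv_apply, rv_apply]
    refine h2 j.rev ?_
    rwa [← Fin.rev_rev j, Fin.rev_lt_rev] at hj
  · rintro ⟨i, h1, h2⟩
    refine ⟨i.rev, by simpa [rv_apply, Fin.rev_rev] using h1, fun j hj => ?_⟩
    have := h2 j.rev (Fin.rev_lt_rev.mp (by simpa [Fin.rev_rev] using hj))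
    simpa [rv_apply, Fin.rev_rev] using this

lemma revLexLE_iff_rv {b a : Fin c →₀ ℕ} : revLexLE b a ↔ lexLE (rv b) (rv a) := by
  unfold revLexLE lexLE
  rw [revLexLT_iff_rv, rv_injective.eq_iff]

lemma finite_deg (c d : ℕ) : {b : Fin c →₀ ℕ | b.degree = d}.Finite :=
  (Finsupp.finite_of_degree_le d).subset fun b hb => le_of_eq hb

lemma degree_eq_card_toMultiset (f : Fin c →₀ ℕ) :
    f.degree = Multiset.card (Finsupp.toMultiset f) := by
  rw [Finsupp.card_toMultiset]; rfl

lemma ncard_deg (hc : 1 ≤ c) (d : ℕ) :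
    {b : Fin c →₀ ℕ | b.degree = d}.ncard = (c - 1 + d).choose d := by
  rw [← Nat.card_coe_set_eq]
  have e : {b : Fin c →₀ ℕ | b.degree = d} ≃ Sym (Fin c) d := by
    refine Equiv.subtypeEquiv (Multiset.toFinsupp (α := Fin c)).symm.toEquiv (fun f => ?_)
    simp only [Set.mem_setOf_eq]
    rw [degree_eq_card_toMultiset]
    exact ⟨fun h => h, fun h => h⟩
  rw [Nat.card_congr e, Nat.card_eq_fintype_card, Sym.card_sym_eq_multichoose,
    Fintype.card_fin, Nat.multichoose_eq]
  congr 1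
  omega


lemma finite_sub_deg {S : Set (Fin c →₀ ℕ)} {d : ℕ} (hS : ∀ b ∈ S, b.degree = d) :
    S.Finite :=
  (finite_deg c d).subset hS

/-- Initial-segment criterion for membership in a downward closed set. -/
lemma mem_iff_ncard_le {T G : Set (Fin c →₀ ℕ)} (hGT : G ⊆ T) (hT : T.Finite)
    (hdc : ∀ g ∈ G, ∀ y ∈ T, lexLE y g → y ∈ G) {m : Fin c →₀ ℕ} (hm : m ∈ T) :
    m ∈ G ↔ {y | y ∈ T ∧ lexLE y m}.ncard ≤ G.ncard := by
  constructor
  · intro hmG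
    exact Set.ncard_le_ncard (fun y hy => hdc m hmG y hy.1 hy.2) (hT.subset hGT)
  · intro hle
    by_contra hmG
    have hsub : G ⊆ {y | y ∈ T ∧ lexLE y m} \ {m} := by
      intro g hg
      have hgm : lexLE g m := by
        rcases lexLE_total g m with hgm | hmg
        · exact hgm
        · exact absurd (hdc g hg m hm hmg) hmG
      refine ⟨⟨hGT hg, hgm⟩, fun hgm' => ?_⟩
      exact hmG (Set.mem_singleton_iff.mp hgm' ▸ hg)
    have hS : {y | y ∈ T ∧ lexLE y m}.Finite := hT.subset fun y hy => hy.1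
    have h1 : G.ncard ≤ ({y | y ∈ T ∧ lexLE y m} \ {m}).ncard :=
      Set.ncard_le_ncard hsub hS.diff
    have h2 : ({y | y ∈ T ∧ lexLE y m} \ {m}).ncard < {y | y ∈ T ∧ lexLE y m}.ncard :=
      Set.ncard_diff_singleton_lt_of_mem ⟨hm, lexLE_refl m⟩ hS
    omega

lemma lexLE_add_right {a b k : Fin c →₀ ℕ} (h : lexLE a b) : lexLE (a + k) (b + k) := by
  rcases h with rfl | ⟨i, h1, h2⟩
  · exact lexLE_refl _
  · exact Or.inr ⟨i, by simpa using h1, fun j hj => by simp [h2 j hj]⟩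

lemma degree_add (a b : Fin c →₀ ℕ) : (a + b).degree = a.degree + b.degree := by
  simp only [degree_eq_sum_univ, Finsupp.add_apply, Finset.sum_add_distrib]

lemma degree_single (i : Fin c) (n : ℕ) : (Finsupp.single i n).degree = n := by
  classical
  rw [degree_eq_sum_univ]
  simp [Finsupp.single_apply]






section Main

variable (hc : 0 < c) (h : ℕ → ℕ)

/-- x ∈ LOIM(h) iff the reversal of x is not in the lex-segment ideal. -/
lemma LOIM_iff_rv (x : Fin c →₀ ℕ) : x ∈ LOIMset c h ↔ rv x ∉ lexSegSet c h := by
  have himg : rv '' {b | b.degree = x.degree ∧ revLexLE b x}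
      = {m | m.degree = (rv x).degree ∧ lexLE m (rv x)} := by
    ext m
    constructor
    · rintro ⟨b, ⟨hd, hle⟩, rfl⟩
      exact ⟨by rw [degree_rv, degree_rv, hd], revLexLE_iff_rv.mp hle⟩
    · rintro ⟨hd, hle⟩
      exact ⟨rv m, ⟨by rw [degree_rv, hd, degree_rv], revLexLE_iff_rv.mpr (by rwa [rv_rv])⟩,
        rv_rv m⟩
  have hn : {b | b.degree = x.degree ∧ revLexLE b x}.ncard
      = {m | m.degree = (rv x).degree ∧ lexLE m (rv x)}.ncard := by
    rw [← himg, Set.ncard_image_of_injective _ rv_injective]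
  simp only [LOIMset, lexSegSet, Set.mem_setOf_eq, hn, degree_rv, not_lt]

/-- Membership in the lex segment set is monotone along lex. -/
lemma seg_antitone {a b : Fin c →₀ ℕ} (hle : lexLE a b) (hd : a.degree = b.degree)
    (hb : b ∉ lexSegSet c h) : a ∉ lexSegSet c h := by
  simp only [lexSegSet, Set.mem_setOf_eq, not_lt] at hb ⊢
  rw [hd]
  refine le_trans (Set.ncard_le_ncard ?_ (finite_sub_deg (fun b' hb' => hb'.1))) hb
  rintro b' ⟨hd', hle'⟩
  exact ⟨hd', lexLE_trans hle' hle⟩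

/-- If `y ∉ J` then the exponent of `z₁` in `y` is smaller than `α`.  Needs the key
algebraic inequality as hypothesis. -/
lemma lt_alpha_of_not_seg
    (key : ∀ d, alphaOf c h ≤ d →
      h d ≤ {b : Fin c →₀ ℕ | b.degree = d ∧ b ⟨0, hc⟩ < alphaOf c h}.ncard)
    {y : Fin c →₀ ℕ} (hy : y ∉ lexSegSet c h) : y ⟨0, hc⟩ < alphaOf c h := by
  by_contra hge
  push_neg at hge
  set α := alphaOf c h
  set d := y.degree with hd
  have hαd : α ≤ d := le_trans hge (Finsupp.le_degree _ y)
  have hkey := key d hαd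
  set A := {b : Fin c →₀ ℕ | b.degree = d ∧ b ⟨0, hc⟩ < α} with hA
  set B := {b : Fin c →₀ ℕ | b.degree = d ∧ lexLE b y} with hB
  have hBfin : B.Finite := finite_sub_deg (fun b hb => hb.1)
  have hsub : insert y A ⊆ B := by
    rintro b (rfl | ⟨hbd, hb0⟩)
    · exact ⟨rfl, lexLE_refl _⟩
    · refine ⟨hbd, Or.inr ⟨⟨0, hc⟩, lt_of_lt_of_le hb0 hge, fun j hj => ?_⟩⟩
      exact absurd hj (by simp [Fin.lt_def])
  have hyA : y ∉ A := fun hyA => absurd hyA.2 (not_lt.mpr hge)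
  have hins : (insert y A).ncard = A.ncard + 1 :=
    Set.ncard_insert_of_notMem hyA (finite_sub_deg (fun b hb => hb.1))
  have : A.ncard + 1 ≤ B.ncard := by
    rw [← hins]; exact Set.ncard_le_ncard hsub hBfin
  exact hy (show h d < B.ncard by omega)


lemma hdecomp_eq (j i : ℕ) :
    hdecomp c h j i = {m : Fin c →₀ ℕ | m ⟨0, hc⟩ = 0 ∧ m.degree = i ∧
      m + Finsupp.single (⟨0, hc⟩ : Fin c) j ∉ lexSegSet c h}.ncard := by
  unfold hdecomp
  congr 1
  ext a
  simp only [Set.mem_setOf_eq]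
  exact ⟨fun ⟨h1, h2, h3⟩ => ⟨h1 hc, h2, h3 hc⟩, fun ⟨h1, h2, h3⟩ => ⟨fun _ => h1, h2, fun _ => h3⟩⟩

lemma crux (y : Fin c →₀ ℕ) :
    y ∉ lexSegSet c h ↔
      {m' : Fin c →₀ ℕ | m' ⟨0, hc⟩ = 0 ∧ m'.degree = y.degree - y ⟨0, hc⟩ ∧
        lexLE m' (y - Finsupp.single (⟨0, hc⟩ : Fin c) (y ⟨0, hc⟩))}.ncard
      ≤ hdecomp c h (y ⟨0, hc⟩) (y.degree - y ⟨0, hc⟩) := by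
  set i0 : Fin c := ⟨0, hc⟩ with hi0
  set j := y i0 with hj
  set m := y - Finsupp.single i0 j with hm
  have hsle : Finsupp.single i0 j ≤ y := by
    intro i
    classical
    rcases eq_or_ne i i0 with rfl | hne
    · simp [hj]
    · simp [Finsupp.single_apply, (Ne.symm hne : i0 ≠ i)]
  have hym : m + Finsupp.single i0 j = y := tsub_add_cancel_of_le hsle
  have hm0 : m i0 = 0 := by
    rw [hm, Finsupp.tsub_apply]
    simp [hj]
  have hdm : m.degree = y.degree - j := by
    have := degree_add m (Finsupp.single i0 j)
    rw [hym, degree_single] at this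
    omega
  have hjd : j ≤ y.degree := Finsupp.le_degree i0 y
  set T := {m' : Fin c →₀ ℕ | m' i0 = 0 ∧ m'.degree = y.degree - j} with hT
  set G := {m' : Fin c →₀ ℕ | m' i0 = 0 ∧ m'.degree = y.degree - j ∧
      m' + Finsupp.single i0 j ∉ lexSegSet c h} with hG
  have hGT : G ⊆ T := fun m' hm' => ⟨hm'.1, hm'.2.1⟩
  have hTfin : T.Finite := finite_sub_deg (fun b hb => hb.2)
  have hdc : ∀ g ∈ G, ∀ y' ∈ T, lexLE y' g → y' ∈ G := by
    rintro g ⟨hg0, hgd, hgs⟩ y' ⟨hy'0, hy'd⟩ hle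
    refine ⟨hy'0, hy'd, ?_⟩
    refine seg_antitone h (lexLE_add_right hle) ?_ hgs
    rw [degree_add, degree_add, hy'd, hgd]
  have hmT : m ∈ T := ⟨hm0, hdm⟩
  have hiff := mem_iff_ncard_le hGT hTfin hdc hmT
  have hmG : m ∈ G ↔ y ∉ lexSegSet c h := by
    simp only [hG, Set.mem_setOf_eq, hym]
    exact ⟨fun h' => h'.2.2, fun h' => ⟨hm0, hdm, h'⟩⟩
  rw [hdecomp_eq hc h j (y.degree - j), ← hmG, hiff]
  have hset : {y' | y' ∈ T ∧ lexLE y' m}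
      = {m' : Fin c →₀ ℕ | m' i0 = 0 ∧ m'.degree = y.degree - j ∧ lexLE m' m} := by
    ext m'
    simp only [hT, Set.mem_setOf_eq, and_assoc]
  rw [hset]

lemma bar_ncard_eq (b : Fin c →₀ ℕ) (e : ℕ) :
    {b' : Fin c →₀ ℕ | (∀ hc' : 0 < c, b' ⟨c - 1, by omega⟩ = 0) ∧ b'.degree = e
        ∧ revLexLE b' b}.ncard
    = {m' : Fin c →₀ ℕ | m' ⟨0, hc⟩ = 0 ∧ m'.degree = e ∧ lexLE m' (rv b)}.ncard := by
  have hrev : (⟨0, hc⟩ : Fin c).rev = ⟨c - 1, by omega⟩ := by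
    ext
    simp [Fin.rev]
  rw [← Set.ncard_image_of_injective _ (rv_injective (c := c))]
  congr 1
  ext m'
  constructor
  · rintro ⟨b', ⟨h1, h2, h3⟩, rfl⟩
    refine ⟨?_, by rwa [degree_rv], revLexLE_iff_rv.mp h3⟩
    rw [rv_apply, hrev]
    exact h1 hc
  · rintro ⟨h1, h2, h3⟩
    refine ⟨rv m', ⟨fun _ => ?_, by rwa [degree_rv], revLexLE_iff_rv.mpr (by rwa [rv_rv])⟩,
      rv_rv m'⟩
    rw [rv_apply, ← hrev, Fin.rev_rev]
    exact h1


lemma single_le_self (y : Fin c →₀ ℕ) (i : Fin c) : Finsupp.single i (y i) ≤ y := by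
  intro i'
  classical
  rcases eq_or_ne i' i with rfl | hne
  · simp
  · simp [Finsupp.single_apply, (Ne.symm hne : i ≠ i')]

lemma sub_single_add (y : Fin c →₀ ℕ) (i : Fin c) :
    y - Finsupp.single i (y i) + Finsupp.single i (y i) = y :=
  tsub_add_cancel_of_le (single_le_self y i)

lemma sub_single_apply (y : Fin c →₀ ℕ) (i : Fin c) : (y - Finsupp.single i (y i)) i = 0 := by
  rw [Finsupp.tsub_apply]
  simp

lemma sub_single_degree (y : Fin c →₀ ℕ) (i : Fin c) :
    (y - Finsupp.single i (y i)).degree = y.degree - y i := by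
  have h1 := degree_add (y - Finsupp.single i (y i)) (Finsupp.single i (y i))
  rw [sub_single_add, degree_single] at h1
  omega

lemma rv_sub (a b : Fin c →₀ ℕ) : rv (a - b) = rv a - rv b := by
  ext i
  rw [rv_apply, Finsupp.tsub_apply, Finsupp.tsub_apply, rv_apply, rv_apply]

theorem main_comb (hc : 1 ≤ c) (h : ℕ → ℕ)
    (key : ∀ d, alphaOf c h ≤ d →
      h d ≤ {b : Fin c →₀ ℕ | b.degree = d ∧ b ⟨0, by omega⟩ < alphaOf c h}.ncard) :
    LOIMset c h = {x : Fin c →₀ ℕ | ∃ j < alphaOf c h, ∃ b ∈ LOIMsetBar c (hdecomp c h j),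
      x = b + Finsupp.single (⟨c - 1, by omega⟩ : Fin c) j} := by
  have hc0 : 0 < c := hc
  have hrev0 : (⟨0, hc0⟩ : Fin c).rev = ⟨c - 1, by omega⟩ := by
    ext; simp [Fin.rev]
  have hrevc : (⟨c - 1, by omega⟩ : Fin c).rev = (⟨0, hc0⟩ : Fin c) := by
    rw [← hrev0, Fin.rev_rev]
  ext x
  rw [Set.mem_setOf_eq, LOIM_iff_rv h x]
  constructor
  · intro hseg
    set y := rv x with hy
    set j := y ⟨0, hc0⟩ with hj
    have hjα : j < alphaOf c h := lt_alpha_of_not_seg hc0 h key hseg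
    set m := y - Finsupp.single (⟨0, hc0⟩ : Fin c) j with hm
    have hdm : m.degree = y.degree - j := sub_single_degree y _
    refine ⟨j, hjα, rv m, ⟨fun _ => ?_, ?_⟩, ?_⟩
    · rw [rv_apply, hrevc, hm, hj]
      exact sub_single_apply y _
    · rw [bar_ncard_eq hc0 (rv m) (rv m).degree, rv_rv, degree_rv, hdm]
      exact (crux hc0 h y).mp hseg
    · rw [← rv_rv x, ← hy, ← sub_single_add y ⟨0, hc0⟩, ← hj, ← hm, rv_add, rv_single, hrev0]
  · rintro ⟨j, hjα, b, ⟨hb0, hbcard⟩, rfl⟩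
    have hb0' : b ⟨c - 1, (by omega : c - 1 < c)⟩ = 0 := hb0 hc0
    have hrvx : rv (b + Finsupp.single (⟨c - 1, by omega⟩ : Fin c) j)
        = rv b + Finsupp.single (⟨0, hc0⟩ : Fin c) j := by
      rw [rv_add, rv_single, hrevc]
    rw [hrvx]
    obtain ⟨y, hy⟩ : ∃ y', y' = rv b + Finsupp.single (⟨0, hc0⟩ : Fin c) j := ⟨_, rfl⟩
    rw [← hy]
    have hy0 : y ⟨0, hc0⟩ = j := by
      rw [hy, Finsupp.add_apply, rv_apply, hrev0, hb0', Finsupp.single_eq_same, zero_add]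
    have hyd : y.degree = b.degree + j := by
      rw [hy, degree_add, degree_single, degree_rv]
    have hysub : y - Finsupp.single (⟨0, hc0⟩ : Fin c) j = rv b := by
      rw [hy, add_tsub_cancel_right]
    have hcrux := crux hc0 h y
    rw [hy0, hysub] at hcrux
    have hbd : y.degree - j = b.degree := by omega
    rw [hbd] at hcrux
    refine hcrux.mpr ?_
    rw [← bar_ncard_eq hc0 b b.degree]
    exact hbcard

end Main

variable {K : Type} [Field K]


lemma finrank_homog (n d : ℕ) :
    Module.finrank K ↥(homogeneousSubmodule (Fin n) K d)
      = {b : Fin n →₀ ℕ | b.degree = d}.ncard := by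
  haveI : Fintype ↥{b : Fin n →₀ ℕ | b.degree = d} := (finite_deg n d).fintype
  have hb := Module.finrank_eq_card_basis
    (basisRestrictSupport K {b : Fin n →₀ ℕ | b.degree = d})
  rw [homogeneousSubmodule_eq_finsupp_supported]
  exact hb.trans (by rw [← Nat.card_coe_set_eq, Nat.card_eq_fintype_card])

lemma homog_module_finite (n d : ℕ) :
    Module.Finite K ↥(homogeneousSubmodule (Fin n) K d) := by
  have e : homogeneousSubmodule (Fin n) K d
      = restrictSupport K {b : Fin n →₀ ℕ | b.degree = d} :=
    homogeneousSubmodule_eq_finsupp_supported _ _ _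
  haveI : Finite ↥{b : Fin n →₀ ℕ | b.degree = d} := (finite_deg n d).to_subtype
  rw [e]
  exact Module.Finite.of_basis (basisRestrictSupport K {b : Fin n →₀ ℕ | b.degree = d})




variable {n : ℕ} (I : Ideal (MvPolynomial (Fin n) K))

/-- Abbreviation for the degree-`d` part of `I`, as a submodule of the space of
degree-`d` homogeneous polynomials. -/
noncomputable def degPart (d : ℕ) : Submodule K ↥(homogeneousSubmodule (Fin n) K d) :=
  Submodule.comap (homogeneousSubmodule (Fin n) K d).subtype (Submodule.restrictScalars K I)

lemma hilb_add_finrank (d : ℕ) :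
    hilbOf I d + Module.finrank K ↥(degPart I d)
      = Module.finrank K ↥(homogeneousSubmodule (Fin n) K d) := by
  haveI := homog_module_finite (K := K) n d
  exact Submodule.finrank_quotient_add_finrank (degPart I d)

lemma exists_nonzero_homog {α : ℕ}
    (hlt : hilbOf I α < Module.finrank K ↥(homogeneousSubmodule (Fin n) K α)) :
    ∃ f : MvPolynomial (Fin n) K, f ∈ I ∧ f.IsHomogeneous α ∧ f ≠ 0 := by
  have h1 := hilb_add_finrank I α
  have h2 : degPart I α ≠ ⊥ := by
    intro hbot
    rw [hbot, finrank_bot] at h1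
    omega
  obtain ⟨x, hx, hx0⟩ := Submodule.exists_mem_ne_zero_of_ne_bot h2
  exact ⟨(x : MvPolynomial (Fin n) K), hx, x.2, fun h0 => hx0 (Subtype.ext h0)⟩

lemma finrank_degPart_ge {α d : ℕ} (hαd : α ≤ d) {f : MvPolynomial (Fin n) K}
    (hfI : f ∈ I) (hf : f.IsHomogeneous α) (hf0 : f ≠ 0) :
    Module.finrank K ↥(homogeneousSubmodule (Fin n) K (d - α))
      ≤ Module.finrank K ↥(degPart I d) := by
  haveI := homog_module_finite (K := K) n d
  have hmul : ∀ q : ↥(homogeneousSubmodule (Fin n) K (d - α)),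
      f * (q : MvPolynomial (Fin n) K) ∈ homogeneousSubmodule (Fin n) K d := by
    intro q
    have := hf.mul q.2
    rwa [show α + (d - α) = d by omega] at this
  let μ : ↥(homogeneousSubmodule (Fin n) K (d - α)) →ₗ[K] ↥(degPart I d) :=
    { toFun := fun q => ⟨⟨f * (q : MvPolynomial (Fin n) K), hmul q⟩,
        by exact Ideal.mul_mem_right _ I hfI⟩
      map_add' := fun q q' => by
        ext
        simp [mul_add]
      map_smul' := fun r q => by
        ext
        simp [Algebra.mul_smul_comm] }
  have hinj : Function.Injective μ := by
    intro q q' hqq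
    have h1 := congrArg Subtype.val (congrArg Subtype.val hqq)
    exact Subtype.ext (mul_left_cancel₀ hf0 h1)
  exact LinearMap.finrank_le_finrank_of_injective hinj


lemma reduce {N : ℕ} (c : ℕ) (I : Ideal (MvPolynomial (Fin N) K))
    (hI : IsStdHomogeneous I) (hc1 : hilbOf I 1 ≤ c) :
    ∃ J : Ideal (MvPolynomial (Fin c) K), IsStdHomogeneous J ∧
      ∀ i, hilbOf J i = hilbOf I i := by
  classical
  haveI := homog_module_finite (K := K) N 1
  set V := homogeneousSubmodule (Fin N) K 1 with hV
  set M := degPart I 1 with hM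
  have hfr : Module.finrank K (V ⧸ M) = hilbOf I 1 := rfl
  set bW := Module.finBasis K (V ⧸ M) with hbW
  have hu : ∀ k, ∃ v : V, M.mkQ v = bW k := fun k => Submodule.mkQ_surjective M (bW k)
  choose u hu using hu
  set L : Fin c → MvPolynomial (Fin N) K := fun i =>
    if hlt : (i : ℕ) < Module.finrank K (V ⧸ M) then (u ⟨i, hlt⟩ : MvPolynomial (Fin N) K)
    else 0 with hL
  have hLhom : ∀ i, (L i).IsHomogeneous 1 := by
    intro i
    rw [hL]
    dsimp only
    split
    · exact (u _).2
    · exact isHomogeneous_zero _ _ _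
  set φ : MvPolynomial (Fin c) K →ₐ[K] MvPolynomial (Fin N) K := aeval L with hφ
  have hφhom : ∀ (p : MvPolynomial (Fin c) K) (m : ℕ), p.IsHomogeneous m →
      (φ p).IsHomogeneous m := by
    intro p m hp
    simpa [hφ] using hp.aeval L hLhom
  have hφcomp : ∀ (p : MvPolynomial (Fin c) K) (m : ℕ),
      homogeneousComponent m (φ p) = φ (homogeneousComponent m p) := by
    intro p m
    conv_lhs => rw [← sum_homogeneousComponent p]
    rw [map_sum, map_sum]
    have hterm : ∀ i ∈ Finset.range (p.totalDegree + 1),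
        homogeneousComponent m (φ (homogeneousComponent i p))
          = if m = i then φ (homogeneousComponent i p) else 0 := fun i _ =>
      homogeneousComponent_of_mem (hφhom _ i (homogeneousComponent_isHomogeneous i p))
    rw [Finset.sum_congr rfl hterm, Finset.sum_ite_eq]
    split
    · rfl
    · rename_i hm
      rw [homogeneousComponent_eq_zero, map_zero]
      simp only [Finset.mem_range] at hm
      omega
  refine ⟨Ideal.comap φ I, ?_, ?_⟩
  · intro p hp i
    rw [Ideal.mem_comap, ← hφcomp]
    exact hI (φ p) (Ideal.mem_comap.mp hp) i
  -- surjectivity of the composite onto the quotient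
  have hXmem : ∀ i : Fin N, ∃ q : MvPolynomial (Fin c) K,
      (X i : MvPolynomial (Fin N) K) - φ q ∈ I := by
    intro i
    set v : V := ⟨X i, isHomogeneous_X _ _⟩ with hv
    set w := M.mkQ v with hw
    set r := bW.repr w with hr
    have hembb : ∀ k : Fin (Module.finrank K (V ⧸ M)), (k : ℕ) < c :=
      fun k => lt_of_lt_of_le k.2 (le_of_le_of_eq (le_of_eq hfr) (by omega) |>.trans hc1)
    refine ⟨∑ k, r k • X (⟨k, hembb k⟩ : Fin c), ?_⟩
    have hφq : φ (∑ k, r k • X (⟨k, hembb k⟩ : Fin c))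
        = ((∑ k, r k • u k : V) : MvPolynomial (Fin N) K) := by
      rw [map_sum]
      rw [Submodule.coe_sum]
      refine Finset.sum_congr rfl fun k _ => ?_
      rw [map_smul, hφ]
      rw [aeval_X]
      rw [hL]
      dsimp only
      rw [dif_pos k.2]
      simp
    have hmk : M.mkQ (∑ k, r k • u k) = w := by
      rw [map_sum]
      simp_rw [map_smul, hu]
      exact bW.sum_repr w
    have hvm : v - (∑ k, r k • u k) ∈ M := by
      have h0 : M.mkQ (v - ∑ k, r k • u k) = 0 := by
        rw [map_sub, hmk, hw, sub_self]
      rw [Submodule.mkQ_apply] at h0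
      exact (Submodule.Quotient.mk_eq_zero M).mp h0
    have : ((v - (∑ k, r k • u k) : V) : MvPolynomial (Fin N) K) ∈ I := hvm
    rw [hφq]
    simpa [hv] using this
  have hψ : Function.Surjective ((Ideal.Quotient.mkₐ K I).comp φ) := by
    rw [← AlgHom.range_eq_top]
    have h2 : Algebra.adjoin K (Set.range (X : Fin N → MvPolynomial (Fin N) K)) = ⊤ :=
      adjoin_range_X
    have h3 := AlgHom.map_adjoin (Ideal.Quotient.mkₐ K I)
      (Set.range (X : Fin N → MvPolynomial (Fin N) K))
    rw [h2, Algebra.map_top, AlgHom.range_eq_top _ |>.mpr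
      (Ideal.Quotient.mkₐ_surjective K I)] at h3
    rw [eq_top_iff, h3]
    apply Algebra.adjoin_le
    rintro _ ⟨_, ⟨i, rfl⟩, rfl⟩
    obtain ⟨q, hq⟩ := hXmem i
    exact ⟨q, (Ideal.Quotient.eq.mpr hq).symm⟩
  intro d
  set Qc := homogeneousSubmodule (Fin c) K d with hQc
  set Qn := homogeneousSubmodule (Fin N) K d with hQn
  have hmulmem : ∀ q : ↥Qc, φ (q : MvPolynomial (Fin c) K) ∈ Qn := fun q => hφhom _ d q.2
  let μφ : ↥Qc →ₗ[K] ↥Qn :=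
    { toFun := fun q => ⟨φ (q : MvPolynomial (Fin c) K), hmulmem q⟩
      map_add' := fun a b => by ext : 1; simp
      map_smul' := fun r a => by ext : 1; simp }
  let ρ := (degPart I d).mkQ.comp μφ
  have hker : LinearMap.ker ρ = degPart (Ideal.comap φ I) d := by
    ext q
    simp only [ρ, LinearMap.mem_ker, LinearMap.comp_apply, Submodule.mkQ_apply,
      Submodule.Quotient.mk_eq_zero]
    exact Iff.rfl
  have hρsurj : Function.Surjective ρ := by
    intro pbar
    obtain ⟨p, rfl⟩ := Submodule.mkQ_surjective _ pbar
    obtain ⟨q0, hq0⟩ := hψ (Ideal.Quotient.mkₐ K I (p : MvPolynomial (Fin N) K))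
    have hsub : φ q0 - (p : MvPolynomial (Fin N) K) ∈ I := by
      have := hq0
      rw [AlgHom.comp_apply, Ideal.Quotient.mkₐ_eq_mk] at this
      exact Ideal.Quotient.eq.mp this
    refine ⟨⟨homogeneousComponent d q0, homogeneousComponent_isHomogeneous d q0⟩, ?_⟩
    show (degPart I d).mkQ (μφ _) = (degPart I d).mkQ p
    rw [Submodule.mkQ_apply, Submodule.mkQ_apply, Submodule.Quotient.eq]
    have hgoal : φ (homogeneousComponent d q0) - (p : MvPolynomial (Fin N) K) ∈ I := by
      rw [← hφcomp]
      have hp : homogeneousComponent d (p : MvPolynomial (Fin N) K)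
          = (p : MvPolynomial (Fin N) K) := by
        rw [homogeneousComponent_of_mem p.2, if_pos rfl]
      have hmem := hI _ hsub d
      rw [map_sub, hp] at hmem
      exact hmem
    exact hgoal
  have e := LinearMap.quotKerEquivOfSurjective ρ hρsurj
  rw [hker] at e
  exact e.finrank_eq


section KeyIneq

variable {K : Type} [Field K]

lemma ncard_split {c : ℕ} (hc : 1 ≤ c) (α d : ℕ) (hαd : α ≤ d) :
    {b : Fin c →₀ ℕ | b.degree = d ∧ b ⟨0, by omega⟩ < α}.ncard
      + (c - 1 + (d - α)).choose (d - α) = (c - 1 + d).choose d := by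
  classical
  set i0 : Fin c := ⟨0, by omega⟩ with hi0
  have hinj : Function.Injective (fun m : Fin c →₀ ℕ => m + Finsupp.single i0 α) := by
    intro a b hab
    ext i
    have := DFunLike.congr_fun hab i
    simp only [Finsupp.add_apply] at this
    omega
  have himg : (fun m : Fin c →₀ ℕ => m + Finsupp.single i0 α) '' {b | b.degree = d - α}
      = {b : Fin c →₀ ℕ | b.degree = d ∧ α ≤ b i0} := by
    ext b
    constructor
    · rintro ⟨m, hm, rfl⟩
      rw [Set.mem_setOf_eq] at hm
      refine ⟨by rw [degree_add, degree_single, hm]; omega, by simp⟩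
    · rintro ⟨hbd, hbα⟩
      have hsle : Finsupp.single i0 α ≤ b := by
        intro i'
        rcases eq_or_ne i' i0 with rfl | hne
        · simpa using hbα
        · simp [Finsupp.single_apply, (Ne.symm hne : i0 ≠ i')]
      refine ⟨b - Finsupp.single i0 α, ?_, tsub_add_cancel_of_le hsle⟩
      rw [Set.mem_setOf_eq]
      have hdeg := degree_add (b - Finsupp.single i0 α) (Finsupp.single i0 α)
      rw [tsub_add_cancel_of_le hsle, degree_single, hbd] at hdeg
      omega
  have hn2 : {b : Fin c →₀ ℕ | b.degree = d ∧ α ≤ b i0}.ncard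
      = (c - 1 + (d - α)).choose (d - α) := by
    rw [← himg, Set.ncard_image_of_injective _ hinj, ncard_deg hc]
  have hunion : {b : Fin c →₀ ℕ | b.degree = d}
      = {b : Fin c →₀ ℕ | b.degree = d ∧ b i0 < α}
        ∪ {b : Fin c →₀ ℕ | b.degree = d ∧ α ≤ b i0} := by
    ext b
    constructor
    · intro hb
      rcases lt_or_ge (b i0) α with hlt | hle
      · exact Or.inl ⟨hb, hlt⟩
      · exact Or.inr ⟨hb, hle⟩
    · rintro (⟨hb, _⟩ | ⟨hb, _⟩) <;> exact hb
  have hdisj : Disjoint {b : Fin c →₀ ℕ | b.degree = d ∧ b i0 < α}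
      {b : Fin c →₀ ℕ | b.degree = d ∧ α ≤ b i0} := by
    rw [Set.disjoint_left]
    rintro b ⟨_, h1⟩ ⟨_, h2⟩
    omega
  have hcardu := Set.ncard_union_eq hdisj (finite_sub_deg fun b hb => hb.1)
    (finite_sub_deg fun b hb => hb.1)
  rw [← hunion, ncard_deg hc] at hcardu
  omega

lemma key_ineq {c t : ℕ} (hc : 1 ≤ c) {h : ℕ → ℕ} (hO : OSequence K h)
    (hfin : ∀ i, t < i → h i = 0) (hc1 : h 1 ≤ c) :
    ∀ d, alphaOf c h ≤ d →
      h d ≤ {b : Fin c →₀ ℕ | b.degree = d ∧ b ⟨0, by omega⟩ < alphaOf c h}.ncard := by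
  obtain ⟨h0, N, I, hI, hh⟩ := hO
  have hc1' : hilbOf I 1 ≤ c := by rw [← hh 1]; exact hc1
  obtain ⟨J, hJ, hJh⟩ := reduce c I hI hc1'
  have hvals : ∀ i, h i = hilbOf J i := fun i => by rw [hh i, ← hJh i]
  have hαmem : h (alphaOf c h) < Nat.choose (c - 1 + alphaOf c h) (alphaOf c h) := by
    have hne : {i : ℕ | h i < Nat.choose (c - 1 + i) i}.Nonempty := by
      refine ⟨t + 1, ?_⟩
      rw [Set.mem_setOf_eq, hfin (t + 1) (by omega)]
      exact Nat.choose_pos (by omega)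
    exact Nat.sInf_mem hne
  have hQα : Module.finrank K ↥(homogeneousSubmodule (Fin c) K (alphaOf c h))
      = Nat.choose (c - 1 + alphaOf c h) (alphaOf c h) := by
    rw [finrank_homog, ncard_deg hc]
  obtain ⟨f, hfJ, hfhom, hf0⟩ := exists_nonzero_homog J
    (by rw [hQα, ← hvals (alphaOf c h)]; exact hαmem)
  intro d hαd
  have h1 := hilb_add_finrank J d
  have h2 := finrank_degPart_ge J hαd hfJ hfhom hf0
  have h3 : Module.finrank K ↥(homogeneousSubmodule (Fin c) K d)
      = Nat.choose (c - 1 + d) d := by rw [finrank_homog, ncard_deg hc]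
  have h4 : Module.finrank K ↥(homogeneousSubmodule (Fin c) K (d - alphaOf c h))
      = Nat.choose (c - 1 + (d - alphaOf c h)) (d - alphaOf c h) := by
    rw [finrank_homog, ncard_deg hc]
  have h5 := ncard_split (c := c) hc (alphaOf c h) d hαd
  have h6 : h d = hilbOf J d := hvals d
  omega

end KeyIneq

/-- Corollary 5.15:  let `h = (h_0,…,h_t)` be an O-sequence with `h_1 ≤ c` and let
`(h^0,…,h^{α−1})` be its decomposition, `α` being the initial degree of the associated
lex-segment ideal.  Then `LOIM(h) = ⋃_{j=0}^{α−1} y_c^j · LOIM(h^j)`, where `LOIM(h^j)`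
is taken inside `K[y_1,…,y_{c−1}]`. -/
theorem LOIM_decomposition {K : Type} [Field K] (c : ℕ) (hc : 1 ≤ c)
    (t : ℕ) (h : ℕ → ℕ) (hO : OSequence K h) (hfin : ∀ i, t < i → h i = 0)
    (hc1 : h 1 ≤ c) :
    LOIMset c h =
      {x : Fin c →₀ ℕ | ∃ j < alphaOf c h, ∃ b ∈ LOIMsetBar c (hdecomp c h j),
        x = b + Finsupp.single (⟨c - 1, by omega⟩ : Fin c) j} := by
  exact main_comb hc hc h (key_ineq (K := K) hc hO hfin hc1)


end GorensteinSI
end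

section
/- Let c ≥ 1, t ≥ 0, s ≥ 2t be integers and suppose every (c+2)-element subset of the set N_{c,s,t} of s+c linear forms generates a complete intersection of codimension c+2 (is linearly independent over K). Then G_{c,s,t} is a generalized stick figure: for any three pairwise distinct ideals P_1, P_2, P_3 occurring as components in the defining intersection of I_{G_{c,s,t}}, the ideal P_1 + P_2 + P_3 has height at least c+2; equivalently, at least c+2 distinct linear forms of N_{c,s,t} occur among the 3c listed generators of P_1, P_2, P_3. -/
open MvPolynomial

namespace GorensteinSI

/-- The linear form at position `p` (0-based) in a component of type `A`/`A′` or `C`: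
the forms alternate `M, L, M, L, …` starting with `M`. -/
noncomputable def formA {K : Type} [Field K] {n : ℕ}
    (M L : ℕ → MvPolynomial (Fin (n + 1)) K) (p idx : ℕ) :
    MvPolynomial (Fin (n + 1)) K :=
  if p % 2 = 0 then M idx else L idx

/-- The linear form at position `p` (0-based) in a component of type `B`/`B′`:
the forms alternate `L, M, L, M, …` starting with `L`. -/
noncomputable def formB {K : Type} [Field K] {n : ℕ}
    (M L : ℕ → MvPolynomial (Fin (n + 1)) K) (p idx : ℕ) :
    MvPolynomial (Fin (n + 1)) K :=
  if p % 2 = 0 then L idx else M idx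

/-- The linear form at position `p` (0-based) in a component of type `C`/`C′`: as in
type `A`, except that the last form (position `c−1`) is always an `L` (for even `c` this
agrees with the alternating pattern). -/
noncomputable def formC {K : Type} [Field K] {n : ℕ}
    (M L : ℕ → MvPolynomial (Fin (n + 1)) K) (c p idx : ℕ) :
    MvPolynomial (Fin (n + 1)) K :=
  if p + 1 = c then L idx else formA M L p idx

/-- Admissible index vectors for components of type `A` (c even) resp. `A′` (c odd):
`0 ≤ i_1 ≤ i_2 < i_3 ≤ i_4 < ⋯` with `i_c ≤ t + ⌊(c−1)/2⌋` (in natural division this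
single bound covers both parities). -/
def admissA (c t : ℕ) (i : ℕ → ℕ) : Prop :=
  (∀ p, p + 1 < c → (if p % 2 = 0 then i p ≤ i (p + 1) else i p < i (p + 1))) ∧
    (i (c - 1) : ℤ) ≤ (t : ℤ) + ((c : ℤ) - 1).fdiv 2

/-- Admissible index vectors for components of type `B` (c even) resp. `B′` (c odd):
`0 ≤ i_1 < i_2 ≤ i_3 < ⋯` with `i_c ≤ t + ⌊(c−2)/2⌋` (covering both parities). -/
def admissB (c t : ℕ) (i : ℕ → ℕ) : Prop :=
  (∀ p, p + 1 < c → (if p % 2 = 0 then i p < i (p + 1) else i p ≤ i (p + 1))) ∧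
    (i (c - 1) : ℤ) ≤ (t : ℤ) + ((c : ℤ) - 2).fdiv 2

/-- Admissible index vectors for components of type `C` (c even) resp. `C′` (c odd):
`0 ≤ i_1 ≤ i_2 < i_3 ≤ ⋯` among the first `c−1` indices, with `i_{c−1} ≤ t + ⌊(c−2)/2⌋`,
and `t + ⌊c/2⌋ ≤ i_c ≤ s − t + ⌊(c−2)/2⌋` (in natural division these bounds cover both
parities). -/
def admissC (c s t : ℕ) (i : ℕ → ℕ) : Prop :=
  (∀ p, p + 2 < c → (if p % 2 = 0 then i p ≤ i (p + 1) else i p < i (p + 1))) ∧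
    (2 ≤ c → (i (c - 2) : ℤ) ≤ (t : ℤ) + ((c : ℤ) - 2).fdiv 2) ∧
    (t : ℤ) + (c : ℤ).fdiv 2 ≤ (i (c - 1) : ℤ) ∧
    (i (c - 1) : ℤ) ≤ (s : ℤ) - (t : ℤ) + ((c : ℤ) - 2).fdiv 2

/-- The generators of the type-`A` component with index vector `i`. -/
noncomputable def gensA {K : Type} [Field K] {n : ℕ}
    (M L : ℕ → MvPolynomial (Fin (n + 1)) K) (c : ℕ) (i : ℕ → ℕ) :
    Set (MvPolynomial (Fin (n + 1)) K) :=
  {q | ∃ p < c, q = formA M L p (i p)}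

/-- The generators of the type-`B` component with index vector `i`. -/
noncomputable def gensB {K : Type} [Field K] {n : ℕ}
    (M L : ℕ → MvPolynomial (Fin (n + 1)) K) (c : ℕ) (i : ℕ → ℕ) :
    Set (MvPolynomial (Fin (n + 1)) K) :=
  {q | ∃ p < c, q = formB M L p (i p)}

/-- The generators of the type-`C` component with index vector `i`. -/
noncomputable def gensC {K : Type} [Field K] {n : ℕ}
    (M L : ℕ → MvPolynomial (Fin (n + 1)) K) (c : ℕ) (i : ℕ → ℕ) :
    Set (MvPolynomial (Fin (n + 1)) K) :=
  {q | ∃ p < c, q = formC M L c p (i p)}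

/-- `P` is a component of `G_{c,s,t}`, with generating set `G` of linear forms. -/
def IsGComponent {K : Type} [Field K] {n : ℕ}
    (M L : ℕ → MvPolynomial (Fin (n + 1)) K) (c s t : ℕ)
    (P : Ideal (MvPolynomial (Fin (n + 1)) K))
    (G : Set (MvPolynomial (Fin (n + 1)) K)) : Prop :=
  (∃ i, admissA c t i ∧ G = gensA M L c i ∧ P = Ideal.span G) ∨
    (∃ i, admissB c t i ∧ G = gensB M L c i ∧ P = Ideal.span G) ∨
    (∃ i, admissC c s t i ∧ G = gensC M L c i ∧ P = Ideal.span G)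

/-- Membership in `N_{c,s,t} = {M_0,…,M_{t+⌊(c−1)/2⌋}, L_0,…,L_{s−t+⌊(c−2)/2⌋}}`,
encoded by indices: `Sum.inl k` stands for `M_k` and `Sum.inr k` for `L_k`. -/
def validNcst (c s t : ℕ) : ℕ ⊕ ℕ → Prop :=
  fun x => match x with
    | Sum.inl k => (k : ℤ) ≤ (t : ℤ) + ((c : ℤ) - 1).fdiv 2
    | Sum.inr k => (k : ℤ) ≤ (s : ℤ) - (t : ℤ) + ((c : ℤ) - 2).fdiv 2


/-- skip enumeration: the increasing enumeration of `{u 0, …, u c} \ {u j}`. -/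
def skipN (u : ℕ → ℕ) (j : ℕ) : ℕ → ℕ := fun p => if p < j then u p else u (p + 1)

/-- φ-shape of a type-A component: values alternate parity starting even,
and the last value is at most `2t + c - 1`. -/
def ShapeA (c t : ℕ) (v : ℕ → ℕ) : Prop :=
  (∀ p, p < c → v p % 2 = p % 2) ∧ v (c - 1) + 1 ≤ 2 * t + c

def ShapeB (c t : ℕ) (v : ℕ → ℕ) : Prop :=
  (∀ p, p < c → v p % 2 = (p + 1) % 2) ∧ v (c - 1) + 2 ≤ 2 * t + c

def ShapeC (c s t : ℕ) (v : ℕ → ℕ) : Prop :=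
  (∀ p, p + 1 < c → v p % 2 = p % 2) ∧ v (c - 1) % 2 = 1 ∧
    (2 ≤ c → v (c - 2) + 2 ≤ 2 * t + c) ∧
    2 * t + c ≤ v (c - 1) ∧ v (c - 1) + 1 ≤ 2 * (s - t) + c

section core
variable {c t s : ℕ} {u : ℕ → ℕ} {a b : ℕ}

-- unpacking lemmas
lemma skip_lt {j p : ℕ} (h : p < j) : skipN u j p = u p := by simp [skipN, h]
lemma skip_ge {j p : ℕ} (h : j ≤ p) : skipN u j p = u (p + 1) := by
  simp [skipN, Nat.not_lt.2 h]

lemma umono (hu : ∀ k, k < c → u k < u (k + 1)) :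
    ∀ {k l}, k ≤ l → l ≤ c → u k ≤ u l := by
  intro k l hkl hl
  induction l, hkl using Nat.le_induction with
  | base => exact le_refl _
  | succ m hm ih =>
      exact le_trans (ih (by omega)) (le_of_lt (hu m (by omega)))

lemma shapeA_lt (h : ShapeA c t (skipN u a)) {p : ℕ} (h1 : p < a) (h2 : p < c) :
    u p % 2 = p % 2 := by
  have := h.1 p h2; rwa [skip_lt h1] at this

lemma shapeA_gt (h : ShapeA c t (skipN u a)) {q : ℕ} (h1 : a < q) (h2 : q ≤ c) :
    u q % 2 = (q + 1) % 2 := by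
  have := h.1 (q - 1) (by omega)
  rw [skip_ge (by omega)] at this
  have hq : q - 1 + 1 = q := by omega
  rw [hq] at this; omega

lemma shapeA_last (h : ShapeA c t (skipN u a)) (hc : 1 ≤ c) (ha : a ≤ c - 1) :
    u c + 1 ≤ 2 * t + c := by
  have := h.2; rwa [skip_ge (by omega), show c - 1 + 1 = c by omega] at this

lemma shapeB_lt (h : ShapeB c t (skipN u a)) {p : ℕ} (h1 : p < a) (h2 : p < c) :
    u p % 2 = (p + 1) % 2 := by
  have := h.1 p h2; rwa [skip_lt h1] at this

lemma shapeB_gt (h : ShapeB c t (skipN u a)) {q : ℕ} (h1 : a < q) (h2 : q ≤ c) :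
    u q % 2 = q % 2 := by
  have := h.1 (q - 1) (by omega)
  rw [skip_ge (by omega), show q - 1 + 1 = q by omega] at this
  omega

lemma shapeB_last (h : ShapeB c t (skipN u a)) (hc : 1 ≤ c) (ha : a ≤ c - 1) :
    u c + 2 ≤ 2 * t + c := by
  have := h.2; rwa [skip_ge (by omega), show c - 1 + 1 = c by omega] at this

lemma shapeC_lt (h : ShapeC c s t (skipN u a)) {p : ℕ} (h1 : p < a) (h2 : p + 1 < c) :
    u p % 2 = p % 2 := by
  have := h.1 p h2; rwa [skip_lt h1] at this

lemma shapeC_gt (h : ShapeC c s t (skipN u a)) {q : ℕ} (h1 : a < q) (h2 : q < c) :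
    u q % 2 = (q + 1) % 2 := by
  have := h.1 (q - 1) (by omega)
  rw [skip_ge (by omega), show q - 1 + 1 = q by omega] at this
  omega

/-- type C, removal `≤ c-1`: the last value of the component is `u c ≥ 2t+c`. -/
lemma shapeC_last_le (h : ShapeC c s t (skipN u a)) (hc : 1 ≤ c) (ha : a ≤ c - 1) :
    2 * t + c ≤ u c := by
  have := h.2.2.2.1; rwa [skip_ge (by omega), show c - 1 + 1 = c by omega] at this

/-- type C, removal `c`: the last value is `u (c-1) ≥ 2t+c`. -/
lemma shapeC_last_eq (h : ShapeC c s t (skipN u c)) (hc : 1 ≤ c) :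
    2 * t + c ≤ u (c - 1) := by
  have := h.2.2.2.1; rwa [skip_lt (by omega)] at this

-- pair lemmas; throughout a < b ≤ c
lemma pairAA (hu : ∀ k, k < c → u k < u (k + 1))
    (hA : ShapeA c t (skipN u a)) (hB : ShapeA c t (skipN u b))
    (hab : a < b) (hbc : b ≤ c) : b = a + 1 := by
  by_contra hne
  have h1 := shapeA_gt hA (q := a + 1) (by omega) (by omega)
  have h2 := shapeA_lt hB (p := a + 1) (by omega) (by omega)
  omega

lemma pairBB (hu : ∀ k, k < c → u k < u (k + 1))
    (hA : ShapeB c t (skipN u a)) (hB : ShapeB c t (skipN u b))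
    (hab : a < b) (hbc : b ≤ c) : b = a + 1 := by
  by_contra hne
  have h1 := shapeB_gt hA (q := a + 1) (by omega) (by omega)
  have h2 := shapeB_lt hB (p := a + 1) (by omega) (by omega)
  omega

lemma pairAB (hu : ∀ k, k < c → u k < u (k + 1))
    (hA : ShapeA c t (skipN u a)) (hB : ShapeB c t (skipN u b))
    (hab : a < b) (hbc : b ≤ c) : a = 0 ∧ b = c := by
  constructor
  · by_contra h0
    have h1 := shapeA_lt hA (p := 0) (by omega) (by omega)
    have h2 := shapeB_lt hB (p := 0) (by omega) (by omega)
    omega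
  · by_contra h0
    have h1 := shapeA_gt hA (q := c) (by omega) (by omega)
    have h2 := shapeB_gt hB (q := c) (by omega) (by omega)
    omega

lemma pairBA (hu : ∀ k, k < c → u k < u (k + 1))
    (hA : ShapeB c t (skipN u a)) (hB : ShapeA c t (skipN u b))
    (hab : a < b) (hbc : b ≤ c) : a = 0 ∧ b = c := by
  constructor
  · by_contra h0
    have h1 := shapeB_lt hA (p := 0) (by omega) (by omega)
    have h2 := shapeA_lt hB (p := 0) (by omega) (by omega)
    omega
  · by_contra h0
    have h1 := shapeB_gt hA (q := c) (by omega) (by omega)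
    have h2 := shapeA_gt hB (q := c) (by omega) (by omega)
    omega

lemma pairAC (hu : ∀ k, k < c → u k < u (k + 1)) (hc : 1 ≤ c)
    (hA : ShapeA c t (skipN u a)) (hB : ShapeC c s t (skipN u b))
    (hab : a < b) (hbc : b ≤ c) : False := by
  have h1 : u c + 1 ≤ 2 * t + c := shapeA_last hA hc (by omega)
  rcases Nat.lt_or_ge b c with hb | hb
  · have h2 := shapeC_last_le hB hc (by omega)
    omega
  · have hbe : b = c := by omega
    rw [hbe] at hB
    have h2 := shapeC_last_eq hB hc
    have h3 : u (c - 1) ≤ u c := umono hu (by omega) (le_refl c)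
    omega

lemma pairCA (hu : ∀ k, k < c → u k < u (k + 1)) (hc : 1 ≤ c)
    (hA : ShapeC c s t (skipN u a)) (hB : ShapeA c t (skipN u b))
    (hab : a < b) (hbc : b ≤ c) : a = c - 1 ∧ b = c := by
  have hbe : b = c := by
    by_contra h0
    have h1 := shapeC_last_le hA hc (by omega)
    have h2 := shapeA_last hB hc (by omega)
    omega
  rw [hbe] at hB
  refine ⟨?_, hbe⟩
  by_contra h0
  have h1 := shapeC_gt hA (q := a + 1) (by omega) (by omega)
  have h2 := shapeA_lt hB (p := a + 1) (by omega) (by omega)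
  omega

lemma pairBC (hu : ∀ k, k < c → u k < u (k + 1)) (hc : 1 ≤ c)
    (hA : ShapeB c t (skipN u a)) (hB : ShapeC c s t (skipN u b))
    (hab : a < b) (hbc : b ≤ c) : False := by
  have h1 : u c + 2 ≤ 2 * t + c := shapeB_last hA hc (by omega)
  rcases Nat.lt_or_ge b c with hb | hb
  · have h2 := shapeC_last_le hB hc (by omega)
    omega
  · have hbe : b = c := by omega
    rw [hbe] at hB
    have h2 := shapeC_last_eq hB hc
    have h3 : u (c - 1) ≤ u c := umono hu (by omega) (le_refl c)
    omega

lemma pairCB (hu : ∀ k, k < c → u k < u (k + 1)) (hc : 1 ≤ c)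
    (hA : ShapeC c s t (skipN u a)) (hB : ShapeB c t (skipN u b))
    (hab : a < b) (hbc : b ≤ c) : a = 0 ∧ b = c := by
  have hbe : b = c := by
    by_contra h0
    have h1 := shapeC_last_le hA hc (by omega)
    have h2 := shapeB_last hB hc (by omega)
    omega
  rw [hbe] at hB
  refine ⟨?_, hbe⟩
  by_contra h0
  have hc2 : 2 ≤ c := by omega
  have h1 := shapeC_lt hA (p := 0) (by omega) (by omega)
  have h2 := shapeB_lt hB (p := 0) (by omega) (by omega)
  omega

lemma pairCC (hu : ∀ k, k < c → u k < u (k + 1)) (hc : 1 ≤ c)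
    (hA : ShapeC c s t (skipN u a)) (hB : ShapeC c s t (skipN u b))
    (hab : a < b) (hbc : b ≤ c) : b = a + 1 ∨ (a + 2 = c ∧ b = c) := by
  by_cases h0 : b = a + 1
  · exact Or.inl h0
  right
  have h1 := shapeC_gt hA (q := a + 1) (by omega) (by omega)
  have ha2 : a + 2 = c := by
    by_contra h2
    have h3 := shapeC_lt hB (p := a + 1) (by omega) (by omega)
    omega
  exact ⟨ha2, by omega⟩

lemma tripleCCC (hu : ∀ k, k < c → u k < u (k + 1)) (hc2 : 2 ≤ c)
    (hA : ShapeC c s t (skipN u (c - 2))) (hB : ShapeC c s t (skipN u c)) : False := by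
  have h1 := hA.2.2.1 hc2
  rw [skip_ge (by omega), show c - 2 + 1 = c - 1 by omega] at h1
  have h2 := shapeC_last_eq hB (by omega)
  omega

def ShapeX (c s t : ℕ) (v : ℕ → ℕ) : Prop :=
  ShapeA c t v ∨ ShapeB c t v ∨ ShapeC c s t v

lemma core_sorted (hc : 1 ≤ c) (hu : ∀ k, k < c → u k < u (k + 1))
    {j₁ j₂ j₃ : ℕ} (h12 : j₁ < j₂) (h23 : j₂ < j₃) (h3 : j₃ ≤ c)
    (s1 : ShapeX c s t (skipN u j₁)) (s2 : ShapeX c s t (skipN u j₂))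
    (s3 : ShapeX c s t (skipN u j₃)) : False := by
  rcases s1 with s1 | s1 | s1 <;> rcases s2 with s2 | s2 | s2 <;>
    rcases s3 with s3 | s3 | s3
  -- AAA
  · have e1 := pairAA hu s1 s2 h12 (by omega)
    have e2 := pairAA hu s1 s3 (by omega) h3
    omega
  -- AAB
  · have e1 := pairAB hu s2 s3 h23 h3
    omega
  -- AAC
  · exact pairAC hu hc s1 s3 (by omega) h3
  -- ABA
  · have e1 := pairAB hu s1 s2 h12 (by omega)
    omega
  -- ABB
  · have e1 := pairAB hu s1 s2 h12 (by omega)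
    omega
  -- ABC
  · exact pairAC hu hc s1 s3 (by omega) h3
  -- ACA
  · exact pairAC hu hc s1 s2 h12 (by omega)
  -- ACB
  · exact pairAC hu hc s1 s2 h12 (by omega)
  -- ACC
  · exact pairAC hu hc s1 s2 h12 (by omega)
  -- BAA
  · have e1 := pairBA hu s1 s2 h12 (by omega)
    omega
  -- BAB
  · have e1 := pairBA hu s1 s2 h12 (by omega)
    omega
  -- BAC
  · exact pairAC hu hc s2 s3 h23 h3
  -- BBA
  · have e1 := pairBA hu s2 s3 h23 h3
    omega
  -- BBB
  · have e1 := pairBB hu s1 s2 h12 (by omega)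
    have e2 := pairBB hu s1 s3 (by omega) h3
    omega
  -- BBC
  · exact pairBC hu hc s1 s3 (by omega) h3
  -- BCA
  · exact pairBC hu hc s1 s2 h12 (by omega)
  -- BCB
  · exact pairBC hu hc s1 s2 h12 (by omega)
  -- BCC
  · exact pairBC hu hc s1 s2 h12 (by omega)
  -- CAA
  · have e1 := pairCA hu hc s1 s2 h12 (by omega)
    omega
  -- CAB
  · have e1 := pairCA hu hc s1 s2 h12 (by omega)
    omega
  -- CAC
  · exact pairAC hu hc s2 s3 h23 h3
  -- CBA
  · have e1 := pairCB hu hc s1 s2 h12 (by omega)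
    omega
  -- CBB
  · have e1 := pairCB hu hc s1 s2 h12 (by omega)
    omega
  -- CBC
  · exact pairBC hu hc s2 s3 h23 h3
  -- CCA
  · have e1 := pairCA hu hc s2 s3 h23 h3
    have e2 := pairCA hu hc s1 s3 (by omega) h3
    omega
  -- CCB
  · have e1 := pairCB hu hc s2 s3 h23 h3
    have e2 := pairCB hu hc s1 s3 (by omega) h3
    omega
  -- CCC
  · have e1 := pairCC hu hc s1 s2 h12 (by omega)
    have e2 := pairCC hu hc s1 s3 (by omega) h3
    have e3 := pairCC hu hc s2 s3 h23 h3
    have hj1 : j₁ = c - 2 ∧ j₃ = c := by omega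
    have hc2 : 2 ≤ c := by omega
    rw [show j₁ = c - 2 by omega] at s1
    rw [show j₃ = c by omega] at s3
    exact tripleCCC hu hc2 s1 s3

lemma core (hc : 1 ≤ c) (hu : ∀ k, k < c → u k < u (k + 1))
    {j₁ j₂ j₃ : ℕ} (hj1 : j₁ ≤ c) (hj2 : j₂ ≤ c) (hj3 : j₃ ≤ c)
    (d12 : j₁ ≠ j₂) (d13 : j₁ ≠ j₃) (d23 : j₂ ≠ j₃)
    (s1 : ShapeX c s t (skipN u j₁)) (s2 : ShapeX c s t (skipN u j₂))
    (s3 : ShapeX c s t (skipN u j₃)) : False := by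
  have tri : (j₁<j₂ ∧ j₂<j₃) ∨ (j₁<j₃ ∧ j₃<j₂) ∨ (j₂<j₁ ∧ j₁<j₃) ∨
      (j₂<j₃ ∧ j₃<j₁) ∨ (j₃<j₁ ∧ j₁<j₂) ∨ (j₃<j₂ ∧ j₂<j₁) := by omega
  rcases tri with ⟨h1,h2⟩|⟨h1,h2⟩|⟨h1,h2⟩|⟨h1,h2⟩|⟨h1,h2⟩|⟨h1,h2⟩
  · exact core_sorted hc hu h1 h2 hj3 s1 s2 s3
  · exact core_sorted hc hu h1 h2 hj2 s1 s3 s2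
  · exact core_sorted hc hu h1 h2 hj3 s2 s1 s3
  · exact core_sorted hc hu h1 h2 hj1 s2 s3 s1
  · exact core_sorted hc hu h1 h2 hj2 s3 s1 s2
  · exact core_sorted hc hu h1 h2 hj1 s3 s2 s1

end core

/-! ### Translation layer: components as φ-encoded label sets -/

noncomputable def form {K : Type} [Field K] {n : ℕ}
    (M L : ℕ → MvPolynomial (Fin (n + 1)) K) : ℕ → MvPolynomial (Fin (n + 1)) K :=
  fun x => if x % 2 = 0 then M (x / 2) else L (x / 2)

def decode : ℕ → ℕ ⊕ ℕ := fun x =>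
  if x % 2 = 0 then Sum.inl (x / 2) else Sum.inr (x / 2)

def vA (i : ℕ → ℕ) : ℕ → ℕ := fun p => 2 * i p + p % 2
def vB (i : ℕ → ℕ) : ℕ → ℕ := fun p => 2 * i p + (1 - p % 2)
def vC (c : ℕ) (i : ℕ → ℕ) : ℕ → ℕ := fun p =>
  if p + 1 = c then 2 * i p + 1 else 2 * i p + p % 2

lemma fdiv_two (x : ℤ) : x.fdiv 2 = x / 2 := Int.fdiv_eq_ediv_of_nonneg x (by norm_num)

section trans
variable {c s t : ℕ} {i : ℕ → ℕ}

lemma admissA_mono (h : admissA c t i) : ∀ p, p + 1 < c → vA i p < vA i (p + 1) := by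
  intro p hp
  have h1 := h.1 p hp
  unfold vA
  rcases Nat.mod_two_eq_zero_or_one p with hp2 | hp2
  · rw [if_pos hp2] at h1; omega
  · rw [if_neg (by omega)] at h1; omega

lemma admissB_mono (h : admissB c t i) : ∀ p, p + 1 < c → vB i p < vB i (p + 1) := by
  intro p hp
  have h1 := h.1 p hp
  unfold vB
  rcases Nat.mod_two_eq_zero_or_one p with hp2 | hp2
  · rw [if_pos hp2] at h1; omega
  · rw [if_neg (by omega)] at h1; omega

lemma admissC_mono (hc : 1 ≤ c) (h : admissC c s t i) :
    ∀ p, p + 1 < c → vC c i p < vC c i (p + 1) := by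
  intro p hp
  rcases Nat.lt_or_ge (p + 2) c with h2 | h2
  · have h1 := h.1 p h2
    unfold vC
    rw [if_neg (by omega), if_neg (by omega)]
    rcases Nat.mod_two_eq_zero_or_one p with hp2 | hp2
    · rw [if_pos hp2] at h1; omega
    · rw [if_neg (by omega)] at h1; omega
  · have hb1 := h.2.1 (by omega)
    have hb2 := h.2.2.1
    rw [fdiv_two] at hb1 hb2
    unfold vC
    rw [if_neg (by omega), if_pos (by omega)]
    rw [show p = c - 2 by omega, show c - 2 + 1 = c - 1 by omega]
    omega

lemma admissA_shape (hc : 1 ≤ c) (h : admissA c t i) : ShapeA c t (vA i) := by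
  constructor
  · intro p hp; unfold vA; omega
  · have h2 := h.2
    rw [fdiv_two] at h2
    unfold vA
    omega

lemma admissB_shape (hc : 1 ≤ c) (h : admissB c t i) : ShapeB c t (vB i) := by
  constructor
  · intro p hp; unfold vB; omega
  · have h2 := h.2
    rw [fdiv_two] at h2
    unfold vB
    omega

lemma admissC_shape (hc : 1 ≤ c) (h : admissC c s t i) : ShapeC c s t (vC c i) := by
  obtain ⟨h1, h2, h3, h4⟩ := h
  rw [fdiv_two] at h2 h3 h4
  refine ⟨?_, ?_, ?_, ?_, ?_⟩
  · intro p hp; unfold vC; rw [if_neg (by omega)]; omega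
  · unfold vC; rw [if_pos (by omega)]; omega
  · intro hc2
    have := h2 hc2
    unfold vC; rw [if_neg (by omega)]
    omega
  · unfold vC; rw [if_pos (by omega)]; omega
  · unfold vC; rw [if_pos (by omega)]; omega

variable {K : Type} [Field K] {n : ℕ} {M L : ℕ → MvPolynomial (Fin (n + 1)) K}

lemma form_vA (p : ℕ) : form M L (vA i p) = formA M L p (i p) := by
  rcases Nat.mod_two_eq_zero_or_one p with hp | hp
  · have e1 : vA i p % 2 = 0 := by unfold vA; omega
    have e2 : vA i p / 2 = i p := by unfold vA; omega
    unfold form formA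
    rw [if_pos e1, if_pos hp, e2]
  · have e1 : ¬ (vA i p % 2 = 0) := by unfold vA; omega
    have e2 : vA i p / 2 = i p := by unfold vA; omega
    unfold form formA
    rw [if_neg e1, if_neg (by omega), e2]

lemma form_vB (p : ℕ) : form M L (vB i p) = formB M L p (i p) := by
  rcases Nat.mod_two_eq_zero_or_one p with hp | hp
  · have e1 : ¬ (vB i p % 2 = 0) := by unfold vB; omega
    have e2 : vB i p / 2 = i p := by unfold vB; omega
    unfold form formB
    rw [if_neg e1, if_pos hp, e2]
  · have e1 : vB i p % 2 = 0 := by unfold vB; omega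
    have e2 : vB i p / 2 = i p := by unfold vB; omega
    unfold form formB
    rw [if_pos e1, if_neg (by omega), e2]

lemma form_vC (p : ℕ) : form M L (vC c i p) = formC M L c p (i p) := by
  by_cases hp : p + 1 = c
  · have e0 : vC c i p = 2 * i p + 1 := by unfold vC; rw [if_pos hp]
    have e1 : ¬ ((2 * i p + 1) % 2 = 0) := by omega
    have e2 : (2 * i p + 1) / 2 = i p := by omega
    unfold form formC
    rw [e0, if_pos hp, if_neg e1, e2]
  · have e0 : vC c i p = vA i p := by unfold vC vA; rw [if_neg hp]
    have e1 : formC M L c p (i p) = formA M L p (i p) := by unfold formC; rw [if_neg hp]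
    rw [e0, e1]
    exact form_vA p

lemma gensA_eq : gensA M L c i = form M L '' (vA i '' Set.Iio c) := by
  ext q
  simp only [gensA, Set.mem_setOf_eq, Set.mem_image, Set.mem_Iio]
  constructor
  · rintro ⟨p, hp, rfl⟩
    exact ⟨vA i p, ⟨p, hp, rfl⟩, form_vA p⟩
  · rintro ⟨x, ⟨p, hp, rfl⟩, rfl⟩
    exact ⟨p, hp, form_vA p⟩

lemma gensB_eq : gensB M L c i = form M L '' (vB i '' Set.Iio c) := by
  ext q
  simp only [gensB, Set.mem_setOf_eq, Set.mem_image, Set.mem_Iio]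
  constructor
  · rintro ⟨p, hp, rfl⟩
    exact ⟨vB i p, ⟨p, hp, rfl⟩, form_vB p⟩
  · rintro ⟨x, ⟨p, hp, rfl⟩, rfl⟩
    exact ⟨p, hp, form_vB p⟩

lemma gensC_eq : gensC M L c i = form M L '' (vC c i '' Set.Iio c) := by
  ext q
  simp only [gensC, Set.mem_setOf_eq, Set.mem_image, Set.mem_Iio]
  constructor
  · rintro ⟨p, hp, rfl⟩
    exact ⟨vC c i p, ⟨p, hp, rfl⟩, form_vC p⟩
  · rintro ⟨x, ⟨p, hp, rfl⟩, rfl⟩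
    exact ⟨p, hp, form_vC p⟩

lemma component_data {P : Ideal (MvPolynomial (Fin (n + 1)) K)}
    {G : Set (MvPolynomial (Fin (n + 1)) K)} (hc : 1 ≤ c)
    (h : IsGComponent M L c s t P G) :
    ∃ v : ℕ → ℕ, (∀ p, p + 1 < c → v p < v (p + 1)) ∧ ShapeX c s t v ∧
      G = form M L '' (v '' Set.Iio c) ∧ P = Ideal.span G := by
  rcases h with ⟨i, hadm, hG, hP⟩ | ⟨i, hadm, hG, hP⟩ | ⟨i, hadm, hG, hP⟩
  · exact ⟨vA i, admissA_mono hadm, Or.inl (admissA_shape hc hadm),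
      by rw [hG, gensA_eq], hP⟩
  · exact ⟨vB i, admissB_mono hadm, Or.inr (Or.inl (admissB_shape hc hadm)),
      by rw [hG, gensB_eq], hP⟩
  · exact ⟨vC c i, admissC_mono hc hadm, Or.inr (Or.inr (admissC_shape hc hadm)),
      by rw [hG, gensC_eq], hP⟩

/-! ### Validity of labels -/

def codeValid (c s t x : ℕ) : Prop :=
  (x % 2 = 0 → x + 1 ≤ 2 * t + c) ∧ (x % 2 = 1 → x + 1 ≤ 2 * (s - t) + c)

lemma mono_of_adj {c : ℕ} {v : ℕ → ℕ} (h : ∀ p, p + 1 < c → v p < v (p + 1)) :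
    ∀ {p q}, p < q → q < c → v p < v q := by
  intro p q hpq hqc
  induction q with
  | zero => omega
  | succ m ih =>
    rcases Nat.lt_or_ge p m with h' | h'
    · exact lt_trans (ih h' (by omega)) (h m hqc)
    · have hpm : p = m := by omega
      subst hpm
      exact h p hqc

lemma shape_valid (hc : 1 ≤ c) (hst : 2 * t ≤ s) {v : ℕ → ℕ}
    (hadj : ∀ p, p + 1 < c → v p < v (p + 1)) (h : ShapeX c s t v) :
    ∀ p, p < c → codeValid c s t (v p) := by
  intro p hp
  have hle : ∀ q, q < c → v q ≤ v (c - 1) := by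
    intro q hq
    rcases Nat.lt_or_ge q (c - 1) with h' | h'
    · exact le_of_lt (mono_of_adj hadj h' (by omega))
    · rw [show q = c - 1 by omega]
  rcases h with hA | hB | hC
  · have h1 := hle p hp
    have h2 := hA.2
    constructor <;> intro _ <;> omega
  · have h1 := hle p hp
    have h2 := hB.2
    constructor <;> intro _ <;> omega
  · rcases Nat.lt_or_ge p (c - 1) with h' | h'
    · have hvp : v p ≤ v (c - 2) := by
        rcases Nat.lt_or_ge p (c - 2) with h'' | h''
        · exact le_of_lt (mono_of_adj hadj h'' (by omega))
        · rw [show p = c - 2 by omega]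
      have h3 := hC.2.2.1 (by omega)
      constructor <;> intro _ <;> omega
    · rw [show p = c - 1 by omega]
      have h1 := hC.2.1
      have h2 := hC.2.2.2.2
      constructor <;> intro _ <;> omega

lemma valid_decode (hc : 1 ≤ c) (hst : 2 * t ≤ s) {x : ℕ} (h : codeValid c s t x) :
    validNcst c s t (decode x) := by
  unfold decode
  rcases Nat.mod_two_eq_zero_or_one x with hx | hx
  · rw [if_pos hx]
    show ((x / 2 : ℕ) : ℤ) ≤ (t : ℤ) + ((c : ℤ) - 1).fdiv 2
    rw [fdiv_two]
    have := h.1 hx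
    omega
  · rw [if_neg (by omega)]
    show ((x / 2 : ℕ) : ℤ) ≤ (s : ℤ) - (t : ℤ) + ((c : ℤ) - 2).fdiv 2
    rw [fdiv_two]
    have := h.2 hx
    omega

lemma decode_inj : Function.Injective decode := by
  intro x y h
  unfold decode at h
  by_cases hx : x % 2 = 0 <;> by_cases hy : y % 2 = 0 <;>
    simp [hx, hy] at h <;> omega

lemma form_eq_elim (x : ℕ) : form M L x = Sum.elim M L (decode x) := by
  unfold form decode
  by_cases hx : x % 2 = 0 <;> simp [hx]

/-! ### Identification of enumerations -/

lemma ident {c : ℕ} {E : Finset ℕ} (hE : E.card = c) {v w : ℕ → ℕ}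
    (hv : ∀ p, p + 1 < c → v p < v (p + 1)) (hw : ∀ p, p + 1 < c → w p < w (p + 1))
    (hvE : ∀ p, p < c → v p ∈ E) (hwE : ∀ p, p < c → w p ∈ E) :
    ∀ p, p < c → v p = w p := by
  have hvm : StrictMono (fun p : Fin c => v p) := by
    intro a b hab
    exact mono_of_adj hv hab b.isLt
  have hwm : StrictMono (fun p : Fin c => w p) := by
    intro a b hab
    exact mono_of_adj hw hab b.isLt
  have h1 := Finset.orderEmbOfFin_unique hE (f := fun p : Fin c => v p)
    (fun x => hvE x x.isLt) hvm
  have h2 := Finset.orderEmbOfFin_unique hE (f := fun p : Fin c => w p)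
    (fun x => hwE x x.isLt) hwm
  intro p hp
  exact congrFun (h1.trans h2.symm) ⟨p, hp⟩

lemma shapeX_congr (hc : 1 ≤ c) {v w : ℕ → ℕ}
    (h : ∀ p, p < c → v p = w p) (hs : ShapeX c s t v) : ShapeX c s t w := by
  have e1 : w (c - 1) = v (c - 1) := (h (c - 1) (by omega)).symm
  have e2 : w (c - 2) = v (c - 2) := (h (c - 2) (by omega)).symm
  rcases hs with h' | h' | h'
  · exact Or.inl ⟨fun p hp => by rw [← h p hp]; exact h'.1 p hp,
      by rw [e1]; exact h'.2⟩
  · exact Or.inr (Or.inl ⟨fun p hp => by rw [← h p hp]; exact h'.1 p hp,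
      by rw [e1]; exact h'.2⟩)
  · exact Or.inr (Or.inr ⟨fun p hp => by rw [← h p (by omega)]; exact h'.1 p hp,
      by rw [e1]; exact h'.2.1,
      fun hc2 => by rw [e2]; exact h'.2.2.1 hc2,
      by rw [e1]; exact h'.2.2.2.1,
      by rw [e1]; exact h'.2.2.2.2⟩)

end trans

/-- Theorem 4.4 (stick figure part): let `c ≥ 1`, `t ≥ 0`, `s ≥ 2t` and suppose every
`(c+2)`-element subset of the `s+c` linear forms `N_{c,s,t}` is linearly independent.
Then `G_{c,s,t}` (whose defining intersection has the components of types `A`, `B`, `C`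
resp. `A′`, `B′`, `C′`) is a generalized stick figure: among the `3c` generators of any
three pairwise distinct components at least `c+2` distinct linear forms occur
(equivalently, the sum of the three component ideals has height at least `c+2`). -/
theorem G_is_generalized_stick_figure {K : Type} [Field K] {n c s t : ℕ}
    (hc : 1 ≤ c) (hcn : c < n + 1) (hst : 2 * t ≤ s)
    (M L : ℕ → MvPolynomial (Fin (n + 1)) K)
    (hMlin : ∀ k : ℕ, (k : ℤ) ≤ (t : ℤ) + ((c : ℤ) - 1).fdiv 2 → (M k).IsHomogeneous 1)
    (hLlin : ∀ k : ℕ, (k : ℤ) ≤ (s : ℤ) - (t : ℤ) + ((c : ℤ) - 2).fdiv 2 →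
      (L k).IsHomogeneous 1)
    (hindep : ∀ S : Finset (ℕ ⊕ ℕ), (↑S ⊆ {x | validNcst c s t x}) → S.card ≤ c + 2 →
      LinearIndependent K (fun j : S => Sum.elim M L j.1)) :
    ∀ (P₁ P₂ P₃ : Ideal (MvPolynomial (Fin (n + 1)) K))
      (G₁ G₂ G₃ : Set (MvPolynomial (Fin (n + 1)) K)),
      IsGComponent M L c s t P₁ G₁ → IsGComponent M L c s t P₂ G₂ →
      IsGComponent M L c s t P₃ G₃ →
      P₁ ≠ P₂ → P₁ ≠ P₃ → P₂ ≠ P₃ →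
      c + 2 ≤ (G₁ ∪ G₂ ∪ G₃).ncard := by
  intro P₁ P₂ P₃ G₁ G₂ G₃ h1 h2 h3 h12 h13 h23
  obtain ⟨v₁, hm₁, hs₁, hG₁, hP₁⟩ := component_data hc h1
  obtain ⟨v₂, hm₂, hs₂, hG₂, hP₂⟩ := component_data hc h2
  obtain ⟨v₃, hm₃, hs₃, hG₃, hP₃⟩ := component_data hc h3
  have hfin : ∀ v : ℕ → ℕ, (v '' Set.Iio c).Finite := fun v => (Set.finite_Iio c).image v
  have hIio : (Set.Iio c : Set ℕ).ncard = c := by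
    rw [← Finset.coe_range, Set.ncard_coe_finset, Finset.card_range]
  have hcard : ∀ v : ℕ → ℕ, (∀ p, p + 1 < c → v p < v (p + 1)) →
      (v '' Set.Iio c).ncard = c := by
    intro v hv
    rw [Set.ncard_image_of_injOn, hIio]
    intro x hx y hy hxy
    rw [Set.mem_Iio] at hx hy
    by_contra hne
    rcases Nat.lt_or_ge x y with h' | h'
    · exact absurd hxy (ne_of_lt (mono_of_adj hv h' hy))
    · exact absurd hxy.symm (ne_of_lt (mono_of_adj hv (by omega) hx))
  have hUfin : (v₁ '' Set.Iio c ∪ v₂ '' Set.Iio c ∪ v₃ '' Set.Iio c).Finite :=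
    ((hfin v₁).union (hfin v₂)).union (hfin v₃)
  by_cases hbig : c + 2 ≤ (v₁ '' Set.Iio c ∪ v₂ '' Set.Iio c ∪ v₃ '' Set.Iio c).ncard
  · -- big case: pick c+2 labels, they give c+2 distinct forms
    have hGu : G₁ ∪ G₂ ∪ G₃ =
        form M L '' (v₁ '' Set.Iio c ∪ v₂ '' Set.Iio c ∪ v₃ '' Set.Iio c) := by
      rw [hG₁, hG₂, hG₃, ← Set.image_union, ← Set.image_union]
    have hFcard : (v₁ '' Set.Iio c ∪ v₂ '' Set.Iio c ∪ v₃ '' Set.Iio c).ncard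
        = hUfin.toFinset.card := Set.ncard_eq_toFinset_card _ hUfin
    obtain ⟨T, hTsub, hTcard⟩ :=
      Finset.exists_subset_card_eq (show c + 2 ≤ hUfin.toFinset.card by omega)
    have hTmem : ∀ x ∈ T, x ∈ v₁ '' Set.Iio c ∪ v₂ '' Set.Iio c ∪ v₃ '' Set.Iio c := by
      intro x hx
      have := hTsub hx
      rwa [Set.Finite.mem_toFinset] at this
    have hTvalid : ∀ x ∈ T, codeValid c s t x := by
      intro x hx
      rcases hTmem x hx with (hx' | hx') | hx'
      · obtain ⟨p, hp, rfl⟩ := hx'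
        exact shape_valid hc hst hm₁ hs₁ p (Set.mem_Iio.mp hp)
      · obtain ⟨p, hp, rfl⟩ := hx'
        exact shape_valid hc hst hm₂ hs₂ p (Set.mem_Iio.mp hp)
      · obtain ⟨p, hp, rfl⟩ := hx'
        exact shape_valid hc hst hm₃ hs₃ p (Set.mem_Iio.mp hp)
    have hDcard : (T.image decode).card = c + 2 := by
      rw [Finset.card_image_of_injective _ decode_inj, hTcard]
    have hDsub : ↑(T.image decode) ⊆ {x | validNcst c s t x} := by
      intro y hy
      simp only [Finset.coe_image, Set.mem_image, Finset.mem_coe] at hy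
      obtain ⟨x, hx, rfl⟩ := hy
      exact valid_decode hc hst (hTvalid x hx)
    have hind := hindep (T.image decode) hDsub (le_of_eq hDcard)
    have hinj : Set.InjOn (form M L) ↑T := by
      intro x hx y hy hxy
      rw [form_eq_elim, form_eq_elim] at hxy
      have hdx : decode x ∈ T.image decode := Finset.mem_image_of_mem _ hx
      have hdy : decode y ∈ T.image decode := Finset.mem_image_of_mem _ hy
      apply decode_inj
      have h' : (fun j : (T.image decode) => Sum.elim M L j.1) ⟨decode x, hdx⟩ =
          (fun j : (T.image decode) => Sum.elim M L j.1) ⟨decode y, hdy⟩ := hxy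
      have := hind.injective h'
      exact congrArg Subtype.val this
    have himg : (form M L '' ↑T).ncard = c + 2 := by
      rw [Set.ncard_image_of_injOn hinj, Set.ncard_coe_finset, hTcard]
    have hsub2 : form M L '' ↑T ⊆ G₁ ∪ G₂ ∪ G₃ := by
      rw [hGu]
      exact Set.image_mono (fun x hx => hTmem x hx)
    have hfinG : (G₁ ∪ G₂ ∪ G₃).Finite := by
      rw [hGu]; exact hUfin.image _
    calc c + 2 = (form M L '' ↑T).ncard := himg.symm
      _ ≤ (G₁ ∪ G₂ ∪ G₃).ncard := Set.ncard_le_ncard hsub2 hfinG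
  · -- small case: derive a contradiction
    exfalso
    have hne12 : v₁ '' Set.Iio c ≠ v₂ '' Set.Iio c := by
      intro h; exact h12 (by rw [hP₁, hP₂, hG₁, hG₂, h])
    have hne13 : v₁ '' Set.Iio c ≠ v₃ '' Set.Iio c := by
      intro h; exact h13 (by rw [hP₁, hP₃, hG₁, hG₃, h])
    have hne23 : v₂ '' Set.Iio c ≠ v₃ '' Set.Iio c := by
      intro h; exact h23 (by rw [hP₂, hP₃, hG₂, hG₃, h])
    set U := v₁ '' Set.Iio c ∪ v₂ '' Set.Iio c ∪ v₃ '' Set.Iio c with hUdef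
    have hsub1 : v₁ '' Set.Iio c ⊆ U := Set.subset_union_left.trans Set.subset_union_left
    have hsub2 : v₂ '' Set.Iio c ⊆ U := Set.subset_union_right.trans Set.subset_union_left
    have hsub3 : v₃ '' Set.Iio c ⊆ U := Set.subset_union_right
    have hUcard : U.ncard = c + 1 := by
      have hge : c ≤ U.ncard := by
        rw [← hcard v₁ hm₁]; exact Set.ncard_le_ncard hsub1 hUfin
      rcases Nat.lt_or_ge U.ncard (c + 1) with h' | h'
      · exfalso
        have e1 : v₁ '' Set.Iio c = U :=
          Set.eq_of_subset_of_ncard_le hsub1 (by rw [hcard v₁ hm₁]; omega) hUfin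
        have e2 : v₂ '' Set.Iio c = U :=
          Set.eq_of_subset_of_ncard_le hsub2 (by rw [hcard v₂ hm₂]; omega) hUfin
        exact hne12 (e1.trans e2.symm)
      · omega
    have hmiss : ∀ S : Set ℕ, S ⊆ U → S.ncard = c →
        ∃ x, x ∈ U ∧ S = U \ {x} := by
      intro S hsub hcard'
      have hd : (U \ S).ncard = 1 := by
        rw [Set.ncard_diff hsub (hUfin.subset hsub)]
        omega
      obtain ⟨x, hx⟩ := Set.ncard_eq_one.mp hd
      have hxUS : x ∈ U \ S := by rw [hx]; exact Set.mem_singleton x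
      refine ⟨x, hxUS.1, ?_⟩
      have hs1 : S ⊆ U \ {x} := by
        intro y hy
        refine ⟨hsub hy, ?_⟩
        intro hyx
        rw [Set.mem_singleton_iff] at hyx
        subst hyx
        exact hxUS.2 hy
      have hcd : (U \ {x}).ncard = c := by
        rw [Set.ncard_diff (Set.singleton_subset_iff.mpr hxUS.1)
          (Set.finite_singleton x), Set.ncard_singleton, hUcard]
        omega
      exact Set.eq_of_subset_of_ncard_le hs1 (by rw [hcd, hcard']) hUfin.diff
    obtain ⟨x₁, hx₁U, hxS₁⟩ := hmiss _ hsub1 (hcard v₁ hm₁)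
    obtain ⟨x₂, hx₂U, hxS₂⟩ := hmiss _ hsub2 (hcard v₂ hm₂)
    obtain ⟨x₃, hx₃U, hxS₃⟩ := hmiss _ hsub3 (hcard v₃ hm₃)
    have hxne12 : x₁ ≠ x₂ := by
      intro h; exact hne12 (by rw [hxS₁, hxS₂, h])
    have hxne13 : x₁ ≠ x₃ := by
      intro h; exact hne13 (by rw [hxS₁, hxS₃, h])
    have hxne23 : x₂ ≠ x₃ := by
      intro h; exact hne23 (by rw [hxS₂, hxS₃, h])
    have hFc : hUfin.toFinset.card = c + 1 := by
      rw [← Set.ncard_eq_toFinset_card _ hUfin, hUcard]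
    have hclt : ∀ k : ℕ, min k c < c + 1 := by intro k; omega
    set u0 := hUfin.toFinset.orderEmbOfFin hFc with hu0def
    set uN : ℕ → ℕ := fun k => u0 ⟨min k c, hclt k⟩ with huNdef
    have huNeq : ∀ (k : ℕ) (hk : k < c + 1), uN k = u0 ⟨k, hk⟩ := by
      intro k hk
      rw [huNdef]
      show u0 ⟨min k c, hclt k⟩ = u0 ⟨k, hk⟩
      exact congrArg (fun z => u0 z)
        (Fin.ext (a := ⟨min k c, hclt k⟩) (b := ⟨k, hk⟩) (by show min k c = k; omega))
    have huNmono : ∀ k, k < c → uN k < uN (k + 1) := by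
      intro k hk
      rw [huNeq k (by omega), huNeq (k + 1) (by omega)]
      exact u0.strictMono (by rw [Fin.mk_lt_mk]; omega)
    have hgetj : ∀ x, x ∈ U → ∃ j : Fin (c + 1), u0 j = x := by
      intro x hx
      have hx' : x ∈ Set.range u0 := by
        rw [hu0def, Finset.range_orderEmbOfFin, Set.Finite.coe_toFinset]
        exact hx
      exact hx'
    obtain ⟨j₁, hj₁⟩ := hgetj x₁ hx₁U
    obtain ⟨j₂, hj₂⟩ := hgetj x₂ hx₂U
    obtain ⟨j₃, hj₃⟩ := hgetj x₃ hx₃U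
    have hkey : ∀ (v : ℕ → ℕ), (∀ p, p + 1 < c → v p < v (p + 1)) →
        ∀ (x : ℕ) (j : Fin (c + 1)), x ∈ U → u0 j = x → v '' Set.Iio c = U \ {x} →
        ∀ p, p < c → v p = skipN uN (j : ℕ) p := by
      intro v hm x j hxU hjx hSx
      have hxF : x ∈ hUfin.toFinset := by rw [Set.Finite.mem_toFinset]; exact hxU
      have hEcard : (hUfin.toFinset.erase x).card = c := by
        rw [Finset.card_erase_of_mem hxF, hFc]
        omega
      have hvE : ∀ p, p < c → v p ∈ hUfin.toFinset.erase x := by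
        intro p hp
        have hvS : v p ∈ U \ {x} := by
          rw [← hSx]; exact ⟨p, Set.mem_Iio.mpr hp, rfl⟩
        rw [Finset.mem_erase]
        refine ⟨?_, by rw [Set.Finite.mem_toFinset]; exact hvS.1⟩
        intro he
        exact hvS.2 (by rw [he]; exact Set.mem_singleton x)
      have hwadj : ∀ p, p + 1 < c → skipN uN (j : ℕ) p < skipN uN (j : ℕ) (p + 1) := by
        intro p hp
        by_cases hb1 : p + 1 < (j : ℕ)
        · rw [skip_lt (by omega), skip_lt hb1]
          exact huNmono p (by omega)
        · by_cases hb2 : p < (j : ℕ)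
          · rw [skip_lt hb2, skip_ge (by omega)]
            exact lt_trans (huNmono p (by omega)) (huNmono (p + 1) hp)
          · rw [skip_ge (by omega), skip_ge (by omega)]
            exact huNmono (p + 1) hp
      have hjc : (j : ℕ) ≤ c := Nat.lt_succ_iff.mp j.isLt
      have hwE : ∀ p, p < c → skipN uN (j : ℕ) p ∈ hUfin.toFinset.erase x := by
        intro p hp
        rw [Finset.mem_erase]
        by_cases hb : p < (j : ℕ)
        · rw [skip_lt hb, huNeq p (by omega)]
          constructor
          · intro he
            have hval : _ = j := u0.injective (he.trans hjx.symm)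
            have hpj : p = (j : ℕ) := by rw [← hval]
            omega
          · rw [hu0def]
            exact Finset.orderEmbOfFin_mem _ hFc _
        · rw [skip_ge (by omega), huNeq (p + 1) (by omega)]
          constructor
          · intro he
            have hval : _ = j := u0.injective (he.trans hjx.symm)
            have hpj : p + 1 = (j : ℕ) := by rw [← hval]
            omega
          · rw [hu0def]
            exact Finset.orderEmbOfFin_mem _ hFc _
      exact ident hEcard hm hwadj hvE hwE
    have hsk₁ : ShapeX c s t (skipN uN (j₁ : ℕ)) :=
      shapeX_congr hc (hkey v₁ hm₁ x₁ j₁ hx₁U hj₁ hxS₁) hs₁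
    have hsk₂ : ShapeX c s t (skipN uN (j₂ : ℕ)) :=
      shapeX_congr hc (hkey v₂ hm₂ x₂ j₂ hx₂U hj₂ hxS₂) hs₂
    have hsk₃ : ShapeX c s t (skipN uN (j₃ : ℕ)) :=
      shapeX_congr hc (hkey v₃ hm₃ x₃ j₃ hx₃U hj₃ hxS₃) hs₃
    have hjd12 : (j₁ : ℕ) ≠ (j₂ : ℕ) := by
      intro h
      exact hxne12 (by rw [← hj₁, ← hj₂]; exact congrArg u0 (Fin.ext h))
    have hjd13 : (j₁ : ℕ) ≠ (j₃ : ℕ) := by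
      intro h
      exact hxne13 (by rw [← hj₁, ← hj₃]; exact congrArg u0 (Fin.ext h))
    have hjd23 : (j₂ : ℕ) ≠ (j₃ : ℕ) := by
      intro h
      exact hxne23 (by rw [← hj₂, ← hj₃]; exact congrArg u0 (Fin.ext h))
    exact core hc huNmono (Nat.lt_succ_iff.mp j₁.isLt) (Nat.lt_succ_iff.mp j₂.isLt)
      (Nat.lt_succ_iff.mp j₃.isLt) hjd12 hjd13 hjd23 hsk₁ hsk₂ hsk₃

end GorensteinSI
end
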